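/- Let G be a profinite group, L a closed normal subgroup, and ρ̄: G → GL_n(k) a continuous representation over a finite field k of characteristic p, decomposing as ρ̄ = σ̄₁ ⊕ σ̄₂ with σ̄_i of dimension n_i. Suppose H^0 and H^1 of G with coefficients in Hom(σ̄₁, σ̄₂) and in Hom(σ̄₂, σ̄₁) all vanish. Then for any complete Noetherian local ring R with residue field k and any continuous lift ρ: G → GL_n(R) of ρ̄, there exist continuous lifts σ_i: G → GL_{n_i}(R) of σ̄_i such that σ₁ ⊕ σ₂ is conjugate to ρ by an element of 1 + M_n(m_R), and each σ_i is unique up to conjugation by 1 + M_{n_i}(m_R). -/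

import Mathlib

/-- Auxiliary predicate for Statement 7: `σ₁, σ₂` are continuous lifts of `σ̄₁, σ̄₂` (via the
reduction map `π : R →+* k`) such that `σ₁ ⊕ σ₂` is conjugate to `ρ` by an element of
`1 + Mₙ(m_R)`. -/
def IsSplitLift {G k R : Type*} [Group G] [TopologicalSpace G] [Field k]
    [CommRing R] [IsLocalRing R] [TopologicalSpace R] {n₁ n₂ : ℕ}
    (π : R →+* k)
    (σb₁ : G →* Matrix.GeneralLinearGroup (Fin n₁) k)
    (σb₂ : G →* Matrix.GeneralLinearGroup (Fin n₂) k)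
    (ρ : G →* Matrix.GeneralLinearGroup (Fin n₁ ⊕ Fin n₂) R)
    (σ₁ : G →* Matrix.GeneralLinearGroup (Fin n₁) R)
    (σ₂ : G →* Matrix.GeneralLinearGroup (Fin n₂) R) : Prop :=
  Continuous (fun g => (σ₁ g : Matrix (Fin n₁) (Fin n₁) R)) ∧
  Continuous (fun g => (σ₂ g : Matrix (Fin n₂) (Fin n₂) R)) ∧
  (∀ g, ((σ₁ g : Matrix (Fin n₁) (Fin n₁) R)).map π = (σb₁ g : Matrix (Fin n₁) (Fin n₁) k)) ∧
  (∀ g, ((σ₂ g : Matrix (Fin n₂) (Fin n₂) R)).map π = (σb₂ g : Matrix (Fin n₂) (Fin n₂) k)) ∧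
  ∃ C : Matrix.GeneralLinearGroup (Fin n₁ ⊕ Fin n₂) R,
    (∀ i j, ((C : Matrix (Fin n₁ ⊕ Fin n₂) (Fin n₁ ⊕ Fin n₂) R) - 1) i j ∈
      IsLocalRing.maximalIdeal R) ∧
    ∀ g, (C : Matrix (Fin n₁ ⊕ Fin n₂) (Fin n₁ ⊕ Fin n₂) R) *
        Matrix.fromBlocks ((σ₁ g : Matrix (Fin n₁) (Fin n₁) R)) 0 0
          ((σ₂ g : Matrix (Fin n₂) (Fin n₂) R)) *
        ((C⁻¹ : Matrix.GeneralLinearGroup (Fin n₁ ⊕ Fin n₂) R) :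
          Matrix (Fin n₁ ⊕ Fin n₂) (Fin n₁ ⊕ Fin n₂) R) =
      (ρ g : Matrix (Fin n₁ ⊕ Fin n₂) (Fin n₁ ⊕ Fin n₂) R)


open IsLocalRing Matrix

section Coords

variable {R : Type*} [CommRing R] [IsLocalRing R] [IsNoetherianRing R]
  {k : Type*} [Field k] (π : R →+* k)

theorem exists_coords (hπsurj : Function.Surjective π)
    (hπker : RingHom.ker π = maximalIdeal R) (I : Ideal R) :
    ∃ (d : ℕ) (φ : Fin d → (↥I →+ k)),
      (∀ l (r : R) (x : ↥I), φ l (r • x) = π r * φ l x) ∧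
      (∀ x : ↥I, (∀ l, φ l x = 0) ↔ (x : R) ∈ maximalIdeal R * I) ∧
      (∀ c : Fin d → k, ∃ x : ↥I, ∀ l, φ l x = c l) := by
  classical
  set m := maximalIdeal R with hm
  let W := (↥I) ⧸ (m • ⊤ : Submodule R ↥I)
  let e : (R ⧸ m) ≃+* k :=
    (Ideal.quotEquivOfEq hπker.symm).trans (RingHom.quotientKerEquivOfSurjective hπsurj)
  letI : Module k W := Module.compHom W e.symm.toRingHom
  have hact : ∀ (c : k) (w : W), c • w = e.symm c • w := fun _ _ => rfl
  have hcompat : ∀ (r : R) (w : W), r • w = π r • w := by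
    intro r w
    rw [hact]
    have h1 : e (Ideal.Quotient.mk m r) = π r := by
      simp only [e, RingEquiv.trans_apply, Ideal.quotEquivOfEq_mk]
      exact RingHom.kerLift_mk π r
    rw [← h1, RingEquiv.symm_apply_apply]
    obtain ⟨x, rfl⟩ := Submodule.Quotient.mk_surjective _ w
    rfl
  have hIfg : I.FG := IsNoetherian.noetherian I
  haveI : Module.Finite R ↥I := Module.Finite.iff_fg.mpr hIfg
  haveI : Module.Finite R W :=
    Module.Finite.of_surjective (Submodule.mkQ _) (Submodule.Quotient.mk_surjective _)
  haveI hWfin : Module.Finite k W := by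
    obtain ⟨s, hs⟩ := Module.Finite.fg_top (R := R) (M := W)
    refine ⟨⟨s, ?_⟩⟩
    rw [eq_top_iff]
    intro w _
    have hw : w ∈ Submodule.span R (s : Set W) := hs ▸ trivial
    refine Submodule.span_induction ?_ ?_ ?_ ?_ hw
    · intro x hx; exact Submodule.subset_span hx
    · exact zero_mem _
    · intro x y _ _ hx hy; exact add_mem hx hy
    · intro r x _ hx; rw [hcompat]; exact Submodule.smul_mem _ _ hx
  let b := Module.finBasis k W
  have hmem : ∀ x : ↥I, (Submodule.Quotient.mk x : W) = 0 ↔ (x : R) ∈ m * I := by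
    intro x
    rw [Submodule.Quotient.mk_eq_zero]
    constructor
    · intro hx
      have : (x : R) ∈ Submodule.map I.subtype (m • (⊤ : Submodule R ↥I)) :=
        Submodule.mem_map_of_mem hx
      rwa [Submodule.map_smul'', Submodule.map_subtype_top, Ideal.smul_eq_mul] at this
    · intro hx
      have : (x : R) ∈ Submodule.map I.subtype (m • (⊤ : Submodule R ↥I)) := by
        rwa [Submodule.map_smul'', Submodule.map_subtype_top, Ideal.smul_eq_mul]
      obtain ⟨y, hy, hyx⟩ := this
      rwa [show y = x from Subtype.ext hyx] at hy
  refine ⟨Module.finrank k W,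
    fun l => AddMonoidHom.mk' (fun x => b.coord l (Submodule.Quotient.mk x)) ?_, ?_, ?_, ?_⟩
  · intro x y
    rw [← map_add, ← Submodule.Quotient.mk_add]
  · intro l r x
    have : (Submodule.Quotient.mk (r • x) : W) = π r • Submodule.Quotient.mk x := by
      rw [Submodule.Quotient.mk_smul, hcompat]
    simp only [AddMonoidHom.mk'_apply, this]
    rw [_root_.map_smul, smul_eq_mul]
  · intro x
    simp only [AddMonoidHom.mk'_apply]
    rw [← hmem x, ← b.forall_coord_eq_zero_iff]
  · intro c
    obtain ⟨x, hx⟩ := Submodule.Quotient.mk_surjective _ (b.equivFun.symm c)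
    refine ⟨x, fun l => ?_⟩
    simp only [AddMonoidHom.mk'_apply, hx, Module.Basis.coord_apply]
    rw [← b.equivFun_apply, b.equivFun.apply_symm_apply]

end Coords


open IsLocalRing Matrix

section Blocks

variable {R : Type*} {α β γ : Type*} [Fintype α] [Fintype β]

theorem toBlocks₁₂_mul [NonUnitalNonAssocSemiring R] (M N : Matrix (α ⊕ β) (α ⊕ β) R) :
    (M * N).toBlocks₁₂ = M.toBlocks₁₁ * N.toBlocks₁₂ + M.toBlocks₁₂ * N.toBlocks₂₂ := by
  ext i j
  simp [Matrix.toBlocks₁₁, Matrix.toBlocks₁₂, Matrix.toBlocks₂₂, Matrix.mul_apply,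
    Fintype.sum_sum_type]

theorem toBlocks₂₁_mul [NonUnitalNonAssocSemiring R] (M N : Matrix (α ⊕ β) (α ⊕ β) R) :
    (M * N).toBlocks₂₁ = M.toBlocks₂₁ * N.toBlocks₁₁ + M.toBlocks₂₂ * N.toBlocks₂₁ := by
  ext i j
  simp [Matrix.toBlocks₂₁, Matrix.toBlocks₁₁, Matrix.toBlocks₂₂, Matrix.mul_apply,
    Fintype.sum_sum_type]

theorem toBlocks₁₁_mul [NonUnitalNonAssocSemiring R] (M N : Matrix (α ⊕ β) (α ⊕ β) R) :
    (M * N).toBlocks₁₁ = M.toBlocks₁₁ * N.toBlocks₁₁ + M.toBlocks₁₂ * N.toBlocks₂₁ := by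
  ext i j
  simp [Matrix.toBlocks₁₁, Matrix.toBlocks₁₂, Matrix.toBlocks₂₁, Matrix.mul_apply,
    Fintype.sum_sum_type]

theorem toBlocks₂₂_mul [NonUnitalNonAssocSemiring R] (M N : Matrix (α ⊕ β) (α ⊕ β) R) :
    (M * N).toBlocks₂₂ = M.toBlocks₂₁ * N.toBlocks₁₂ + M.toBlocks₂₂ * N.toBlocks₂₂ := by
  ext i j
  simp [Matrix.toBlocks₂₂, Matrix.toBlocks₁₂, Matrix.toBlocks₂₁, Matrix.mul_apply,
    Fintype.sum_sum_type]

theorem toBlocks₁₁_one [DecidableEq α] [DecidableEq β] [Zero R] [One R] :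
    (1 : Matrix (α ⊕ β) (α ⊕ β) R).toBlocks₁₁ = 1 := by
  have h : (1 : Matrix (α ⊕ β) (α ⊕ β) R) = Matrix.fromBlocks 1 0 0 1 :=
    Matrix.fromBlocks_one.symm
  rw [h, Matrix.toBlocks_fromBlocks₁₁]

theorem toBlocks₂₂_one [DecidableEq α] [DecidableEq β] [Zero R] [One R] :
    (1 : Matrix (α ⊕ β) (α ⊕ β) R).toBlocks₂₂ = 1 := by
  have h : (1 : Matrix (α ⊕ β) (α ⊕ β) R) = Matrix.fromBlocks 1 0 0 1 :=
    Matrix.fromBlocks_one.symm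
  rw [h, Matrix.toBlocks_fromBlocks₂₂]

theorem one_apply_inl_inl [DecidableEq α] [DecidableEq β] [Zero R] [One R] (i j : α) :
    (1 : Matrix (α ⊕ β) (α ⊕ β) R) (Sum.inl i) (Sum.inl j) = (1 : Matrix α α R) i j := by
  rw [Matrix.one_apply, Matrix.one_apply]
  by_cases h : i = j <;> simp [h]

theorem one_apply_inr_inr [DecidableEq α] [DecidableEq β] [Zero R] [One R] (i j : β) :
    (1 : Matrix (α ⊕ β) (α ⊕ β) R) (Sum.inr i) (Sum.inr j) = (1 : Matrix β β R) i j := by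
  rw [Matrix.one_apply, Matrix.one_apply]
  by_cases h : i = j <;> simp [h]

theorem toBlocks₁₁_map {S : Type*} (M : Matrix (α ⊕ β) (α ⊕ β) R) (f : R → S) :
    (M.map f).toBlocks₁₁ = M.toBlocks₁₁.map f := rfl

theorem toBlocks₁₂_map {S : Type*} (M : Matrix (α ⊕ β) (α ⊕ β) R) (f : R → S) :
    (M.map f).toBlocks₁₂ = M.toBlocks₁₂.map f := rfl

theorem toBlocks₂₁_map {S : Type*} (M : Matrix (α ⊕ β) (α ⊕ β) R) (f : R → S) :
    (M.map f).toBlocks₂₁ = M.toBlocks₂₁.map f := rfl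

theorem toBlocks₂₂_map {S : Type*} (M : Matrix (α ⊕ β) (α ⊕ β) R) (f : R → S) :
    (M.map f).toBlocks₂₂ = M.toBlocks₂₂.map f := rfl

theorem conj_upper_blocks [Ring R] [DecidableEq α] [DecidableEq β] (X : Matrix α β R) (M : Matrix (α ⊕ β) (α ⊕ β) R) :
    fromBlocks 1 X 0 1 * M * fromBlocks 1 (-X) 0 1 =
      fromBlocks (M.toBlocks₁₁ + X * M.toBlocks₂₁)
        (M.toBlocks₁₂ + X * M.toBlocks₂₂ - (M.toBlocks₁₁ + X * M.toBlocks₂₁) * X)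
        M.toBlocks₂₁ (M.toBlocks₂₂ - M.toBlocks₂₁ * X) := by
  conv_lhs => rw [← fromBlocks_toBlocks M]
  rw [fromBlocks_multiply, fromBlocks_multiply]
  simp only [Matrix.one_mul, Matrix.mul_one, Matrix.zero_mul, Matrix.mul_zero, add_zero,
    zero_add, Matrix.mul_neg, Matrix.neg_mul]
  congr 1 <;> abel

theorem conj_lower_blocks [Ring R] [DecidableEq α] [DecidableEq β] (Y : Matrix β α R) (M : Matrix (α ⊕ β) (α ⊕ β) R) :
    fromBlocks 1 0 Y 1 * M * fromBlocks 1 0 (-Y) 1 =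
      fromBlocks (M.toBlocks₁₁ - M.toBlocks₁₂ * Y) M.toBlocks₁₂
        (M.toBlocks₂₁ + Y * M.toBlocks₁₁ - (Y * M.toBlocks₁₂ + M.toBlocks₂₂) * Y)
        (M.toBlocks₂₂ + Y * M.toBlocks₁₂) := by
  conv_lhs => rw [← fromBlocks_toBlocks M]
  rw [fromBlocks_multiply, fromBlocks_multiply]
  simp only [Matrix.one_mul, Matrix.mul_one, Matrix.zero_mul, Matrix.mul_zero, add_zero,
    zero_add, Matrix.mul_neg, Matrix.neg_mul]
  congr 1 <;> abel

theorem matrix_inv_mul_cancel_right {α m n : Type*} [CommRing α] [Fintype m] [DecidableEq m]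
    (A : Matrix n m α) (u : (Matrix m m α)ˣ) :
    A * (↑u⁻¹ : Matrix m m α) * (↑u : Matrix m m α) = A := by
  rw [Matrix.mul_assoc, Units.inv_mul, Matrix.mul_one]

theorem matrix_mul_inv_cancel_right {α m n : Type*} [CommRing α] [Fintype m] [DecidableEq m]
    (A : Matrix n m α) (u : (Matrix m m α)ˣ) :
    A * (↑u : Matrix m m α) * (↑u⁻¹ : Matrix m m α) = A := by
  rw [Matrix.mul_assoc, Units.mul_inv, Matrix.mul_one]

end Blocks

section MemHelpers

variable {R : Type*} [CommRing R] {a b c : Type*} [Fintype b]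

theorem matmul_mem_left {J : Ideal R} (A : Matrix a b R) {X : Matrix b c R}
    (hX : ∀ i j, X i j ∈ J) : ∀ i j, (A * X) i j ∈ J := by
  intro i j
  rw [Matrix.mul_apply]
  exact sum_mem fun u _ => J.mul_mem_left _ (hX u j)

theorem matmul_mem_right {J : Ideal R} {X : Matrix a b R} (B : Matrix b c R)
    (hX : ∀ i j, X i j ∈ J) : ∀ i j, (X * B) i j ∈ J := by
  intro i j
  rw [Matrix.mul_apply]
  exact sum_mem fun u _ => J.mul_mem_right _ (hX i u)

theorem matmul_mem_mul {I J : Ideal R} {X : Matrix a b R} {Y : Matrix b c R}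
    (hX : ∀ i j, X i j ∈ I) (hY : ∀ i j, Y i j ∈ J) : ∀ i j, (X * Y) i j ∈ I * J := by
  intro i j
  rw [Matrix.mul_apply]
  exact sum_mem fun u _ => Ideal.mul_mem_mul (hX i u) (hY u j)

end MemHelpers

section Phi

open scoped Classical

variable {R : Type*} [CommRing R] {k : Type*} [Field k] {I : Ideal R}

/-- Entrywise application of a coordinate functional `φl : I →+ k` to a matrix with
entries in `I` (junk value `0` outside `I`). -/
noncomputable def PhiM (φl : ↥I →+ k) {a b : Type*} (X : Matrix a b R) : Matrix a b k :=
  fun i j => if h : X i j ∈ I then φl ⟨X i j, h⟩ else 0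

variable (φl : ↥I →+ k) {a a' b c : Type*}

theorem PhiM_apply_mem {X : Matrix a b R} {i : a} {j : b} (h : X i j ∈ I) :
    PhiM φl X i j = φl ⟨X i j, h⟩ := by
  unfold PhiM
  exact dif_pos h

theorem PhiM_add {X Y : Matrix a b R} (hX : ∀ i j, X i j ∈ I) (hY : ∀ i j, Y i j ∈ I) :
    PhiM φl (X + Y) = PhiM φl X + PhiM φl Y := by
  ext i j
  have h : (X + Y) i j ∈ I := add_mem (hX i j) (hY i j)
  rw [Matrix.add_apply, PhiM_apply_mem φl h, PhiM_apply_mem φl (hX i j),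
    PhiM_apply_mem φl (hY i j)]
  have : (⟨(X + Y) i j, h⟩ : ↥I) = ⟨X i j, hX i j⟩ + ⟨Y i j, hY i j⟩ := rfl
  rw [this, map_add]

theorem PhiM_sub {X Y : Matrix a b R} (hX : ∀ i j, X i j ∈ I) (hY : ∀ i j, Y i j ∈ I) :
    PhiM φl (X - Y) = PhiM φl X - PhiM φl Y := by
  ext i j
  have h : (X - Y) i j ∈ I := sub_mem (hX i j) (hY i j)
  rw [Matrix.sub_apply, PhiM_apply_mem φl h, PhiM_apply_mem φl (hX i j),
    PhiM_apply_mem φl (hY i j)]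
  have : (⟨(X - Y) i j, h⟩ : ↥I) = ⟨X i j, hX i j⟩ - ⟨Y i j, hY i j⟩ := rfl
  rw [this, map_sub]

variable {π : R →+* k}

theorem PhiM_mul_left [Fintype a] (hsemi : ∀ (r : R) (x : ↥I), φl (r • x) = π r * φl x)
    (A : Matrix a' a R) {X : Matrix a b R} (hX : ∀ i j, X i j ∈ I) :
    PhiM φl (A * X) = A.map π * PhiM φl X := by
  ext i j
  have hmem : (A * X) i j ∈ I := matmul_mem_left A hX i j
  have : (⟨(A * X) i j, hmem⟩ : ↥I) = ∑ u, A i u • (⟨X u j, hX u j⟩ : ↥I) := by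
    apply Subtype.ext
    simp [Matrix.mul_apply]
  rw [PhiM_apply_mem φl hmem, this, map_sum, Matrix.mul_apply]
  refine Finset.sum_congr rfl fun u _ => ?_
  rw [hsemi, Matrix.map_apply, PhiM_apply_mem φl (hX u j)]

theorem PhiM_mul_right [Fintype b] (hsemi : ∀ (r : R) (x : ↥I), φl (r • x) = π r * φl x)
    {X : Matrix a b R} (B : Matrix b c R) (hX : ∀ i j, X i j ∈ I) :
    PhiM φl (X * B) = PhiM φl X * B.map π := by
  ext i j
  have hmem : (X * B) i j ∈ I := matmul_mem_right B hX i j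
  have : (⟨(X * B) i j, hmem⟩ : ↥I) = ∑ u, B u j • (⟨X i u, hX i u⟩ : ↥I) := by
    apply Subtype.ext
    simp [Matrix.mul_apply, mul_comm]
  rw [PhiM_apply_mem φl hmem, this, map_sum, Matrix.mul_apply]
  refine Finset.sum_congr rfl fun u _ => ?_
  rw [hsemi, Matrix.map_apply, PhiM_apply_mem φl (hX i u), mul_comm]

end Phi

section Substep

variable {G : Type*} [Group G] [TopologicalSpace G] [IsTopologicalGroup G]
  {k : Type*} [Field k] [TopologicalSpace k] [DiscreteTopology k]
  {R : Type*} [CommRing R] [IsLocalRing R] [IsNoetherianRing R]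
  [TopologicalSpace R] [IsTopologicalRing R]
  {n₁ n₂ : ℕ}
  {π : R →+* k}
  {σb₁ : G →* Matrix.GeneralLinearGroup (Fin n₁) k}
  {σb₂ : G →* Matrix.GeneralLinearGroup (Fin n₂) k}

theorem substepB
    (hadic : IsAdic (maximalIdeal R))
    (hπsurj : Function.Surjective π) (hπker : RingHom.ker π = maximalIdeal R)
    (hσb₂ : Continuous fun g => (σb₂ g : Matrix (Fin n₂) (Fin n₂) k))
    (hH1b : ∀ c : G → Matrix (Fin n₁) (Fin n₂) k, Continuous c →
      (∀ g h, c (g * h) = c g + (σb₁ g : Matrix (Fin n₁) (Fin n₁) k) * c h *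
        (((σb₂ g)⁻¹ : Matrix.GeneralLinearGroup (Fin n₂) k) : Matrix (Fin n₂) (Fin n₂) k)) →
      ∃ M : Matrix (Fin n₁) (Fin n₂) k, ∀ g,
        c g = (σb₁ g : Matrix (Fin n₁) (Fin n₁) k) * M *
          (((σb₂ g)⁻¹ : Matrix.GeneralLinearGroup (Fin n₂) k) :
            Matrix (Fin n₂) (Fin n₂) k) - M)
    (t : ℕ)
    (τ : G →* Matrix.GeneralLinearGroup (Fin n₁ ⊕ Fin n₂) R)
    (hτcont : Continuous fun g => (τ g : Matrix (Fin n₁ ⊕ Fin n₂) (Fin n₁ ⊕ Fin n₂) R))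
    (hτred : ∀ g, ((τ g : Matrix (Fin n₁ ⊕ Fin n₂) (Fin n₁ ⊕ Fin n₂) R)).map π =
      Matrix.fromBlocks (σb₁ g : Matrix (Fin n₁) (Fin n₁) k) 0 0
        (σb₂ g : Matrix (Fin n₂) (Fin n₂) k))
    (hB : ∀ g i j, ((τ g : Matrix (Fin n₁ ⊕ Fin n₂) (Fin n₁ ⊕ Fin n₂) R)).toBlocks₁₂ i j ∈
      maximalIdeal R ^ t) :
    ∃ X : Matrix (Fin n₁) (Fin n₂) R, (∀ i j, X i j ∈ maximalIdeal R ^ t) ∧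
      ∀ g i j, (((τ g : Matrix (Fin n₁ ⊕ Fin n₂) (Fin n₁ ⊕ Fin n₂) R)).toBlocks₁₂ +
        X * ((τ g : Matrix (Fin n₁ ⊕ Fin n₂) (Fin n₁ ⊕ Fin n₂) R)).toBlocks₂₂ -
        ((τ g : Matrix (Fin n₁ ⊕ Fin n₂) (Fin n₁ ⊕ Fin n₂) R)).toBlocks₁₁ * X) i j ∈
        maximalIdeal R ^ (t + 1) := by
  classical
  obtain ⟨d, φ, hsemi, hvanish, hsurjc⟩ := exists_coords π hπsurj hπker (maximalIdeal R ^ t)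
  have hvan' : ∀ (r : R) (hr : r ∈ maximalIdeal R ^ t),
      r ∈ maximalIdeal R ^ (t + 1) → ∀ l, φ l ⟨r, hr⟩ = 0 := by
    intro r hr hr' l
    refine (hvanish ⟨r, hr⟩).mpr ?_ l
    rwa [← pow_succ']
  have hAred : ∀ g, ((τ g : Matrix (Fin n₁ ⊕ Fin n₂) (Fin n₁ ⊕ Fin n₂) R)).toBlocks₁₁.map π =
      (σb₁ g : Matrix (Fin n₁) (Fin n₁) k) := by
    intro g; rw [← toBlocks₁₁_map, hτred g, Matrix.toBlocks_fromBlocks₁₁]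
  have hDred : ∀ g, ((τ g : Matrix (Fin n₁ ⊕ Fin n₂) (Fin n₁ ⊕ Fin n₂) R)).toBlocks₂₂.map π =
      (σb₂ g : Matrix (Fin n₂) (Fin n₂) k) := by
    intro g; rw [← toBlocks₂₂_map, hτred g, Matrix.toBlocks_fromBlocks₂₂]
  set B : G → Matrix (Fin n₁) (Fin n₂) R :=
    fun g => ((τ g : Matrix (Fin n₁ ⊕ Fin n₂) (Fin n₁ ⊕ Fin n₂) R)).toBlocks₁₂ with hBdef
  have hinvcont : Continuous fun g => (((σb₂ g)⁻¹ : Matrix.GeneralLinearGroup (Fin n₂) k) :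
      Matrix (Fin n₂) (Fin n₂) k) := by
    have heq : (fun g => (((σb₂ g)⁻¹ : Matrix.GeneralLinearGroup (Fin n₂) k) :
        Matrix (Fin n₂) (Fin n₂) k)) =
        (fun g => (σb₂ g : Matrix (Fin n₂) (Fin n₂) k)) ∘ (fun g : G => g⁻¹) := by
      funext g
      simp only [Function.comp_apply, ← map_inv]
    rw [heq]
    exact hσb₂.comp continuous_inv
  have hPhicont : ∀ l, Continuous fun g => PhiM (φ l) (B g) := by
    intro l
    refine continuous_matrix fun i j => ?_
    refine IsLocallyConstant.continuous ?_
    rw [IsLocallyConstant.iff_exists_open]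
    intro g₀
    refine ⟨{g | B g i j - B g₀ i j ∈ maximalIdeal R ^ (t + 1)}, ?_, by simp, ?_⟩
    · have hJopen : IsOpen ((maximalIdeal R ^ (t + 1) : Ideal R) : Set R) :=
        (isAdic_iff.mp hadic).1 (t + 1)
      have hcB : Continuous fun g => B g i j := hτcont.matrix_elem _ _
      exact (hJopen.preimage (continuous_sub_right _)).preimage hcB
    · intro g hg
      rw [PhiM_apply_mem (φ l) (hB g i j), PhiM_apply_mem (φ l) (hB g₀ i j)]
      have hrep : (⟨B g i j, hB g i j⟩ : ↥(maximalIdeal R ^ t)) - ⟨B g₀ i j, hB g₀ i j⟩ =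
          ⟨B g i j - B g₀ i j, sub_mem (hB g i j) (hB g₀ i j)⟩ := rfl
      have hz := hvan' _ (sub_mem (hB g i j) (hB g₀ i j)) hg l
      rw [← sub_eq_zero, ← map_sub, hrep, hz]
  have hcont : ∀ l, Continuous (fun g => PhiM (φ l) (B g) *
      (((σb₂ g)⁻¹ : Matrix.GeneralLinearGroup (Fin n₂) k) : Matrix (Fin n₂) (Fin n₂) k)) :=
    fun l => ((hPhicont l).matrix_mul hinvcont)
  have hcoc : ∀ l g h, PhiM (φ l) (B (g * h)) *
      (((σb₂ (g * h))⁻¹ : Matrix.GeneralLinearGroup (Fin n₂) k) : Matrix (Fin n₂) (Fin n₂) k) =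
      PhiM (φ l) (B g) *
      (((σb₂ g)⁻¹ : Matrix.GeneralLinearGroup (Fin n₂) k) : Matrix (Fin n₂) (Fin n₂) k) +
      (σb₁ g : Matrix (Fin n₁) (Fin n₁) k) * (PhiM (φ l) (B h) *
      (((σb₂ h)⁻¹ : Matrix.GeneralLinearGroup (Fin n₂) k) : Matrix (Fin n₂) (Fin n₂) k)) *
      (((σb₂ g)⁻¹ : Matrix.GeneralLinearGroup (Fin n₂) k) : Matrix (Fin n₂) (Fin n₂) k) := by
    intro l g h
    have hblock : B (g * h) =
        ((τ g : Matrix (Fin n₁ ⊕ Fin n₂) (Fin n₁ ⊕ Fin n₂) R)).toBlocks₁₁ * B h +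
        B g * ((τ h : Matrix (Fin n₁ ⊕ Fin n₂) (Fin n₁ ⊕ Fin n₂) R)).toBlocks₂₂ := by
      rw [hBdef]
      show ((τ (g * h) : Matrix (Fin n₁ ⊕ Fin n₂) (Fin n₁ ⊕ Fin n₂) R)).toBlocks₁₂ = _
      rw [_root_.map_mul, Units.val_mul, toBlocks₁₂_mul]
    have e1 : PhiM (φ l) (B (g * h)) =
        (σb₁ g : Matrix (Fin n₁) (Fin n₁) k) * PhiM (φ l) (B h) +
        PhiM (φ l) (B g) * (σb₂ h : Matrix (Fin n₂) (Fin n₂) k) := by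
      rw [hblock, PhiM_add (φ l) (matmul_mem_left _ (hB h)) (matmul_mem_right _ (hB g)),
        PhiM_mul_left (φ l) (hsemi l) _ (hB h), PhiM_mul_right (φ l) (hsemi l) _ (hB g),
        hAred, hDred]
    have hinv : (((σb₂ (g * h))⁻¹ : Matrix.GeneralLinearGroup (Fin n₂) k) :
        Matrix (Fin n₂) (Fin n₂) k) =
        (((σb₂ h)⁻¹ : Matrix.GeneralLinearGroup (Fin n₂) k) : Matrix (Fin n₂) (Fin n₂) k) *
        (((σb₂ g)⁻¹ : Matrix.GeneralLinearGroup (Fin n₂) k) : Matrix (Fin n₂) (Fin n₂) k) := by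
      rw [_root_.map_mul, _root_.mul_inv_rev, Units.val_mul]
    rw [e1, hinv, Matrix.add_mul]
    simp only [Matrix.mul_assoc, Units.mul_inv_cancel_left]
    exact add_comm _ _
  choose M hM using fun l => hH1b
    (fun g => PhiM (φ l) (B g) *
      (((σb₂ g)⁻¹ : Matrix.GeneralLinearGroup (Fin n₂) k) : Matrix (Fin n₂) (Fin n₂) k))
    (hcont l) (hcoc l)
  choose x hx using fun (i : Fin n₁) (j : Fin n₂) => hsurjc (fun l => M l i j)
  refine ⟨fun i j => ((x i j : R)), fun i j => (x i j).2, ?_⟩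
  intro g i j
  set X : Matrix (Fin n₁) (Fin n₂) R := fun i j => ((x i j : R)) with hXdef
  have hXmem : ∀ i j, X i j ∈ maximalIdeal R ^ t := fun i j => (x i j).2
  have hPX : ∀ l, PhiM (φ l) X = M l := by
    intro l
    ext i j
    rw [PhiM_apply_mem (φ l) (hXmem i j)]
    have : (⟨X i j, hXmem i j⟩ : ↥(maximalIdeal R ^ t)) = x i j := Subtype.ext rfl
    rw [this]
    exact hx i j l
  have hTmem : ∀ i j, (B g +
      X * ((τ g : Matrix (Fin n₁ ⊕ Fin n₂) (Fin n₁ ⊕ Fin n₂) R)).toBlocks₂₂ -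
      ((τ g : Matrix (Fin n₁ ⊕ Fin n₂) (Fin n₁ ⊕ Fin n₂) R)).toBlocks₁₁ * X) i j ∈
      maximalIdeal R ^ t := by
    intro i j
    exact sub_mem (add_mem (hB g i j) (matmul_mem_right _ hXmem i j))
      (matmul_mem_left _ hXmem i j)
  have hPhiT : ∀ l, PhiM (φ l) (B g +
      X * ((τ g : Matrix (Fin n₁ ⊕ Fin n₂) (Fin n₁ ⊕ Fin n₂) R)).toBlocks₂₂ -
      ((τ g : Matrix (Fin n₁ ⊕ Fin n₂) (Fin n₁ ⊕ Fin n₂) R)).toBlocks₁₁ * X) = 0 := by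
    intro l
    have hBg' : PhiM (φ l) (B g) =
        (σb₁ g : Matrix (Fin n₁) (Fin n₁) k) * M l -
          M l * (σb₂ g : Matrix (Fin n₂) (Fin n₂) k) := by
      calc PhiM (φ l) (B g)
          = PhiM (φ l) (B g) *
            (((σb₂ g)⁻¹ : Matrix.GeneralLinearGroup (Fin n₂) k) :
              Matrix (Fin n₂) (Fin n₂) k) * (σb₂ g : Matrix (Fin n₂) (Fin n₂) k) :=
            (matrix_inv_mul_cancel_right _ _).symm
        _ = ((σb₁ g : Matrix (Fin n₁) (Fin n₁) k) * M l *
            (((σb₂ g)⁻¹ : Matrix.GeneralLinearGroup (Fin n₂) k) :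
              Matrix (Fin n₂) (Fin n₂) k) - M l) * (σb₂ g : Matrix (Fin n₂) (Fin n₂) k) := by
            rw [hM l g]
        _ = _ := by rw [Matrix.sub_mul, matrix_inv_mul_cancel_right]
    have h1 : ∀ i j, (X * ((τ g : Matrix (Fin n₁ ⊕ Fin n₂) (Fin n₁ ⊕ Fin n₂) R)).toBlocks₂₂)
        i j ∈ maximalIdeal R ^ t := matmul_mem_right _ hXmem
    have h2 : ∀ i j, (B g + X * ((τ g : Matrix (Fin n₁ ⊕ Fin n₂) (Fin n₁ ⊕ Fin n₂) R)).toBlocks₂₂)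
        i j ∈ maximalIdeal R ^ t := by
      intro i j; rw [Matrix.add_apply]; exact add_mem (hB g i j) (h1 i j)
    have h3 : ∀ i j, (((τ g : Matrix (Fin n₁ ⊕ Fin n₂) (Fin n₁ ⊕ Fin n₂) R)).toBlocks₁₁ * X)
        i j ∈ maximalIdeal R ^ t := matmul_mem_left _ hXmem
    rw [PhiM_sub (φ l) h2 h3,
      PhiM_add (φ l) (hB g) h1,
      PhiM_mul_left (φ l) (hsemi l) _ hXmem, PhiM_mul_right (φ l) (hsemi l) _ hXmem,
      hAred, hDred, hPX, hBg']
    abel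
  show _ ∈ maximalIdeal R ^ (t + 1)
  rw [pow_succ']
  refine (hvanish ⟨_, hTmem i j⟩).mp ?_
  intro l
  have h0 := congrFun (congrFun (hPhiT l) i) j
  rw [PhiM_apply_mem (φ l) (hTmem i j)] at h0
  exact h0

theorem substepC
    (hadic : IsAdic (maximalIdeal R))
    (hπsurj : Function.Surjective π) (hπker : RingHom.ker π = maximalIdeal R)
    (hσb₁ : Continuous fun g => (σb₁ g : Matrix (Fin n₁) (Fin n₁) k))
    (hH1a : ∀ c : G → Matrix (Fin n₂) (Fin n₁) k, Continuous c →
      (∀ g h, c (g * h) = c g + (σb₂ g : Matrix (Fin n₂) (Fin n₂) k) * c h *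
        (((σb₁ g)⁻¹ : Matrix.GeneralLinearGroup (Fin n₁) k) : Matrix (Fin n₁) (Fin n₁) k)) →
      ∃ M : Matrix (Fin n₂) (Fin n₁) k, ∀ g,
        c g = (σb₂ g : Matrix (Fin n₂) (Fin n₂) k) * M *
          (((σb₁ g)⁻¹ : Matrix.GeneralLinearGroup (Fin n₁) k) :
            Matrix (Fin n₁) (Fin n₁) k) - M)
    (t : ℕ)
    (τ : G →* Matrix.GeneralLinearGroup (Fin n₁ ⊕ Fin n₂) R)
    (hτcont : Continuous fun g => (τ g : Matrix (Fin n₁ ⊕ Fin n₂) (Fin n₁ ⊕ Fin n₂) R))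
    (hτred : ∀ g, ((τ g : Matrix (Fin n₁ ⊕ Fin n₂) (Fin n₁ ⊕ Fin n₂) R)).map π =
      Matrix.fromBlocks (σb₁ g : Matrix (Fin n₁) (Fin n₁) k) 0 0
        (σb₂ g : Matrix (Fin n₂) (Fin n₂) k))
    (hC : ∀ g i j, ((τ g : Matrix (Fin n₁ ⊕ Fin n₂) (Fin n₁ ⊕ Fin n₂) R)).toBlocks₂₁ i j ∈
      maximalIdeal R ^ t) :
    ∃ Y : Matrix (Fin n₂) (Fin n₁) R, (∀ i j, Y i j ∈ maximalIdeal R ^ t) ∧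
      ∀ g i j, (((τ g : Matrix (Fin n₁ ⊕ Fin n₂) (Fin n₁ ⊕ Fin n₂) R)).toBlocks₂₁ +
        Y * ((τ g : Matrix (Fin n₁ ⊕ Fin n₂) (Fin n₁ ⊕ Fin n₂) R)).toBlocks₁₁ -
        ((τ g : Matrix (Fin n₁ ⊕ Fin n₂) (Fin n₁ ⊕ Fin n₂) R)).toBlocks₂₂ * Y) i j ∈
        maximalIdeal R ^ (t + 1) := by
  classical
  obtain ⟨d, φ, hsemi, hvanish, hsurjc⟩ := exists_coords π hπsurj hπker (maximalIdeal R ^ t)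
  have hvan' : ∀ (r : R) (hr : r ∈ maximalIdeal R ^ t),
      r ∈ maximalIdeal R ^ (t + 1) → ∀ l, φ l ⟨r, hr⟩ = 0 := by
    intro r hr hr' l
    refine (hvanish ⟨r, hr⟩).mpr ?_ l
    rwa [← pow_succ']
  have hAred : ∀ g, ((τ g : Matrix (Fin n₁ ⊕ Fin n₂) (Fin n₁ ⊕ Fin n₂) R)).toBlocks₁₁.map π =
      (σb₁ g : Matrix (Fin n₁) (Fin n₁) k) := by
    intro g; rw [← toBlocks₁₁_map, hτred g, Matrix.toBlocks_fromBlocks₁₁]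
  have hDred : ∀ g, ((τ g : Matrix (Fin n₁ ⊕ Fin n₂) (Fin n₁ ⊕ Fin n₂) R)).toBlocks₂₂.map π =
      (σb₂ g : Matrix (Fin n₂) (Fin n₂) k) := by
    intro g; rw [← toBlocks₂₂_map, hτred g, Matrix.toBlocks_fromBlocks₂₂]
  set B : G → Matrix (Fin n₂) (Fin n₁) R :=
    fun g => ((τ g : Matrix (Fin n₁ ⊕ Fin n₂) (Fin n₁ ⊕ Fin n₂) R)).toBlocks₂₁ with hBdef
  have hinvcont : Continuous fun g => (((σb₁ g)⁻¹ : Matrix.GeneralLinearGroup (Fin n₁) k) :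
      Matrix (Fin n₁) (Fin n₁) k) := by
    have heq : (fun g => (((σb₁ g)⁻¹ : Matrix.GeneralLinearGroup (Fin n₁) k) :
        Matrix (Fin n₁) (Fin n₁) k)) =
        (fun g => (σb₁ g : Matrix (Fin n₁) (Fin n₁) k)) ∘ (fun g : G => g⁻¹) := by
      funext g
      simp only [Function.comp_apply, ← map_inv]
    rw [heq]
    exact hσb₁.comp continuous_inv
  have hPhicont : ∀ l, Continuous fun g => PhiM (φ l) (B g) := by
    intro l
    refine continuous_matrix fun i j => ?_
    refine IsLocallyConstant.continuous ?_
    rw [IsLocallyConstant.iff_exists_open]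
    intro g₀
    refine ⟨{g | B g i j - B g₀ i j ∈ maximalIdeal R ^ (t + 1)}, ?_, by simp, ?_⟩
    · have hJopen : IsOpen ((maximalIdeal R ^ (t + 1) : Ideal R) : Set R) :=
        (isAdic_iff.mp hadic).1 (t + 1)
      have hcB : Continuous fun g => B g i j := hτcont.matrix_elem _ _
      exact (hJopen.preimage (continuous_sub_right _)).preimage hcB
    · intro g hg
      rw [PhiM_apply_mem (φ l) (hC g i j), PhiM_apply_mem (φ l) (hC g₀ i j)]
      have hrep : (⟨B g i j, hC g i j⟩ : ↥(maximalIdeal R ^ t)) - ⟨B g₀ i j, hC g₀ i j⟩ =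
          ⟨B g i j - B g₀ i j, sub_mem (hC g i j) (hC g₀ i j)⟩ := rfl
      have hz := hvan' _ (sub_mem (hC g i j) (hC g₀ i j)) hg l
      rw [← sub_eq_zero, ← map_sub, hrep, hz]
  have hcont : ∀ l, Continuous (fun g => PhiM (φ l) (B g) *
      (((σb₁ g)⁻¹ : Matrix.GeneralLinearGroup (Fin n₁) k) : Matrix (Fin n₁) (Fin n₁) k)) :=
    fun l => ((hPhicont l).matrix_mul hinvcont)
  have hcoc : ∀ l g h, PhiM (φ l) (B (g * h)) *
      (((σb₁ (g * h))⁻¹ : Matrix.GeneralLinearGroup (Fin n₁) k) : Matrix (Fin n₁) (Fin n₁) k) =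
      PhiM (φ l) (B g) *
      (((σb₁ g)⁻¹ : Matrix.GeneralLinearGroup (Fin n₁) k) : Matrix (Fin n₁) (Fin n₁) k) +
      (σb₂ g : Matrix (Fin n₂) (Fin n₂) k) * (PhiM (φ l) (B h) *
      (((σb₁ h)⁻¹ : Matrix.GeneralLinearGroup (Fin n₁) k) : Matrix (Fin n₁) (Fin n₁) k)) *
      (((σb₁ g)⁻¹ : Matrix.GeneralLinearGroup (Fin n₁) k) : Matrix (Fin n₁) (Fin n₁) k) := by
    intro l g h
    have hblock : B (g * h) =
        B g * ((τ h : Matrix (Fin n₁ ⊕ Fin n₂) (Fin n₁ ⊕ Fin n₂) R)).toBlocks₁₁ +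
        ((τ g : Matrix (Fin n₁ ⊕ Fin n₂) (Fin n₁ ⊕ Fin n₂) R)).toBlocks₂₂ * B h := by
      rw [hBdef]
      show ((τ (g * h) : Matrix (Fin n₁ ⊕ Fin n₂) (Fin n₁ ⊕ Fin n₂) R)).toBlocks₂₁ = _
      rw [_root_.map_mul, Units.val_mul, toBlocks₂₁_mul]
    have e1 : PhiM (φ l) (B (g * h)) =
        PhiM (φ l) (B g) * (σb₁ h : Matrix (Fin n₁) (Fin n₁) k) +
        (σb₂ g : Matrix (Fin n₂) (Fin n₂) k) * PhiM (φ l) (B h) := by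
      rw [hblock, PhiM_add (φ l) (matmul_mem_right _ (hC g)) (matmul_mem_left _ (hC h)),
        PhiM_mul_left (φ l) (hsemi l) _ (hC h), PhiM_mul_right (φ l) (hsemi l) _ (hC g),
        hAred, hDred]
    have hinv : (((σb₁ (g * h))⁻¹ : Matrix.GeneralLinearGroup (Fin n₁) k) :
        Matrix (Fin n₁) (Fin n₁) k) =
        (((σb₁ h)⁻¹ : Matrix.GeneralLinearGroup (Fin n₁) k) : Matrix (Fin n₁) (Fin n₁) k) *
        (((σb₁ g)⁻¹ : Matrix.GeneralLinearGroup (Fin n₁) k) : Matrix (Fin n₁) (Fin n₁) k) := by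
      rw [_root_.map_mul, _root_.mul_inv_rev, Units.val_mul]
    rw [e1, hinv, Matrix.add_mul]
    simp only [Matrix.mul_assoc, Units.mul_inv_cancel_left]
  choose M hM using fun l => hH1a
    (fun g => PhiM (φ l) (B g) *
      (((σb₁ g)⁻¹ : Matrix.GeneralLinearGroup (Fin n₁) k) : Matrix (Fin n₁) (Fin n₁) k))
    (hcont l) (hcoc l)
  choose x hx using fun (i : Fin n₂) (j : Fin n₁) => hsurjc (fun l => M l i j)
  refine ⟨fun i j => ((x i j : R)), fun i j => (x i j).2, ?_⟩
  intro g i j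
  set Y : Matrix (Fin n₂) (Fin n₁) R := fun i j => ((x i j : R)) with hYdef
  have hYmem : ∀ i j, Y i j ∈ maximalIdeal R ^ t := fun i j => (x i j).2
  have hPY : ∀ l, PhiM (φ l) Y = M l := by
    intro l
    ext i j
    rw [PhiM_apply_mem (φ l) (hYmem i j)]
    have : (⟨Y i j, hYmem i j⟩ : ↥(maximalIdeal R ^ t)) = x i j := Subtype.ext rfl
    rw [this]
    exact hx i j l
  have hTmem : ∀ i j, (B g +
      Y * ((τ g : Matrix (Fin n₁ ⊕ Fin n₂) (Fin n₁ ⊕ Fin n₂) R)).toBlocks₁₁ -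
      ((τ g : Matrix (Fin n₁ ⊕ Fin n₂) (Fin n₁ ⊕ Fin n₂) R)).toBlocks₂₂ * Y) i j ∈
      maximalIdeal R ^ t := by
    intro i j
    rw [Matrix.sub_apply, Matrix.add_apply]
    exact sub_mem (add_mem (hC g i j) (matmul_mem_right _ hYmem i j))
      (matmul_mem_left _ hYmem i j)
  have hPhiT : ∀ l, PhiM (φ l) (B g +
      Y * ((τ g : Matrix (Fin n₁ ⊕ Fin n₂) (Fin n₁ ⊕ Fin n₂) R)).toBlocks₁₁ -
      ((τ g : Matrix (Fin n₁ ⊕ Fin n₂) (Fin n₁ ⊕ Fin n₂) R)).toBlocks₂₂ * Y) = 0 := by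
    intro l
    have hBg' : PhiM (φ l) (B g) =
        (σb₂ g : Matrix (Fin n₂) (Fin n₂) k) * M l -
          M l * (σb₁ g : Matrix (Fin n₁) (Fin n₁) k) := by
      calc PhiM (φ l) (B g)
          = PhiM (φ l) (B g) *
            (((σb₁ g)⁻¹ : Matrix.GeneralLinearGroup (Fin n₁) k) :
              Matrix (Fin n₁) (Fin n₁) k) * (σb₁ g : Matrix (Fin n₁) (Fin n₁) k) :=
            (matrix_inv_mul_cancel_right _ _).symm
        _ = ((σb₂ g : Matrix (Fin n₂) (Fin n₂) k) * M l *
            (((σb₁ g)⁻¹ : Matrix.GeneralLinearGroup (Fin n₁) k) :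
              Matrix (Fin n₁) (Fin n₁) k) - M l) * (σb₁ g : Matrix (Fin n₁) (Fin n₁) k) := by
            rw [hM l g]
        _ = _ := by rw [Matrix.sub_mul, matrix_inv_mul_cancel_right]
    have h1 : ∀ i j, (Y * ((τ g : Matrix (Fin n₁ ⊕ Fin n₂) (Fin n₁ ⊕ Fin n₂) R)).toBlocks₁₁)
        i j ∈ maximalIdeal R ^ t := matmul_mem_right _ hYmem
    have h2 : ∀ i j, (B g + Y * ((τ g : Matrix (Fin n₁ ⊕ Fin n₂) (Fin n₁ ⊕ Fin n₂) R)).toBlocks₁₁)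
        i j ∈ maximalIdeal R ^ t := by
      intro i j; rw [Matrix.add_apply]; exact add_mem (hC g i j) (h1 i j)
    have h3 : ∀ i j, (((τ g : Matrix (Fin n₁ ⊕ Fin n₂) (Fin n₁ ⊕ Fin n₂) R)).toBlocks₂₂ * Y)
        i j ∈ maximalIdeal R ^ t := matmul_mem_left _ hYmem
    rw [PhiM_sub (φ l) h2 h3,
      PhiM_add (φ l) (hC g) h1,
      PhiM_mul_left (φ l) (hsemi l) _ hYmem, PhiM_mul_right (φ l) (hsemi l) _ hYmem,
      hAred, hDred, hPY, hBg']
    abel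
  show _ ∈ maximalIdeal R ^ (t + 1)
  rw [pow_succ']
  refine (hvanish ⟨_, hTmem i j⟩).mp ?_
  intro l
  have h0 := congrFun (congrFun (hPhiT l) i) j
  rw [PhiM_apply_mem (φ l) (hTmem i j)] at h0
  exact h0

end Substep

theorem mem_ker_of_mem_pow {R : Type*} [CommRing R] [IsLocalRing R] {k : Type*} [Field k]
    {π : R →+* k} (hπker : RingHom.ker π = maximalIdeal R) {t : ℕ} (ht : 1 ≤ t) {r : R}
    (hr : r ∈ maximalIdeal R ^ t) : π r = 0 := by
  have : r ∈ maximalIdeal R := Ideal.pow_le_self (by omega) hr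
  rw [← hπker] at this
  exact this

theorem map_eq_zero_of_mem_pow {R : Type*} [CommRing R] [IsLocalRing R] {k : Type*} [Field k]
    {π : R →+* k} (hπker : RingHom.ker π = maximalIdeal R) {t : ℕ} (ht : 1 ≤ t)
    {a b : Type*} {X : Matrix a b R} (hX : ∀ i j, X i j ∈ maximalIdeal R ^ t) :
    X.map π = 0 := by
  ext i j
  exact mem_ker_of_mem_pow hπker ht (hX i j)

section StepSec

variable {G : Type*} [Group G] [TopologicalSpace G] [IsTopologicalGroup G]
  {k : Type*} [Field k] [TopologicalSpace k] [DiscreteTopology k]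
  {R : Type*} [CommRing R] [IsLocalRing R] [IsNoetherianRing R]
  [TopologicalSpace R] [IsTopologicalRing R]
  {n₁ n₂ : ℕ}
  {π : R →+* k}
  {σb₁ : G →* Matrix.GeneralLinearGroup (Fin n₁) k}
  {σb₂ : G →* Matrix.GeneralLinearGroup (Fin n₂) k}

/-- The unipotent upper-triangular block unit. -/
noncomputable def upperUnit (X : Matrix (Fin n₁) (Fin n₂) R) :
    Matrix.GeneralLinearGroup (Fin n₁ ⊕ Fin n₂) R where
  val := Matrix.fromBlocks 1 X 0 1
  inv := Matrix.fromBlocks 1 (-X) 0 1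
  val_inv := by
    rw [Matrix.fromBlocks_multiply]
    simp [Matrix.fromBlocks_one]
  inv_val := by
    rw [Matrix.fromBlocks_multiply]
    simp [Matrix.fromBlocks_one]

/-- The unipotent lower-triangular block unit. -/
noncomputable def lowerUnit (Y : Matrix (Fin n₂) (Fin n₁) R) :
    Matrix.GeneralLinearGroup (Fin n₁ ⊕ Fin n₂) R where
  val := Matrix.fromBlocks 1 0 Y 1
  inv := Matrix.fromBlocks 1 0 (-Y) 1
  val_inv := by
    rw [Matrix.fromBlocks_multiply]
    simp [Matrix.fromBlocks_one]
  inv_val := by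
    rw [Matrix.fromBlocks_multiply]
    simp [Matrix.fromBlocks_one]

theorem upperUnit_map_one (hπker : RingHom.ker π = maximalIdeal R)
    {X : Matrix (Fin n₁) (Fin n₂) R} (hX : ∀ i j, X i j ∈ maximalIdeal R) :
    ((upperUnit X : Matrix (Fin n₁ ⊕ Fin n₂) (Fin n₁ ⊕ Fin n₂) R)).map π = 1 := by
  show (Matrix.fromBlocks 1 X 0 1).map π = 1
  rw [Matrix.fromBlocks_map]
  have hX0 : X.map π = 0 := by
    ext i j
    have : X i j ∈ RingHom.ker π := by rw [hπker]; exact hX i j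
    exact this
  rw [hX0, Matrix.map_one π (map_zero π) (map_one π),
    Matrix.map_zero π (map_zero π), Matrix.map_one π (map_zero π) (map_one π),
    Matrix.fromBlocks_one]

theorem lowerUnit_map_one (hπker : RingHom.ker π = maximalIdeal R)
    {Y : Matrix (Fin n₂) (Fin n₁) R} (hY : ∀ i j, Y i j ∈ maximalIdeal R) :
    ((lowerUnit Y : Matrix (Fin n₁ ⊕ Fin n₂) (Fin n₁ ⊕ Fin n₂) R)).map π = 1 := by
  show (Matrix.fromBlocks 1 0 Y 1).map π = 1
  rw [Matrix.fromBlocks_map]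
  have hY0 : Y.map π = 0 := by
    ext i j
    have : Y i j ∈ RingHom.ker π := by rw [hπker]; exact hY i j
    exact this
  rw [hY0, Matrix.map_one π (map_zero π) (map_one π),
    Matrix.map_zero π (map_zero π), Matrix.map_one π (map_zero π) (map_one π),
    Matrix.fromBlocks_one]

theorem upperUnit_sub_one_mem {J : Ideal R} {X : Matrix (Fin n₁) (Fin n₂) R}
    (hX : ∀ i j, X i j ∈ J) :
    ∀ i j, (((upperUnit X : Matrix (Fin n₁ ⊕ Fin n₂) (Fin n₁ ⊕ Fin n₂) R)) - 1) i j ∈ J := by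
  intro i j
  have h1 : ((upperUnit X : Matrix (Fin n₁ ⊕ Fin n₂) (Fin n₁ ⊕ Fin n₂) R)) - 1 =
      Matrix.fromBlocks 0 X 0 0 := by
    show Matrix.fromBlocks 1 X 0 1 - 1 = Matrix.fromBlocks 0 X 0 0
    rw [← Matrix.fromBlocks_one (l := Fin n₁) (m := Fin n₂) (α := R)]
    rw [sub_eq_add_neg, Matrix.fromBlocks_neg, Matrix.fromBlocks_add]
    simp
  rw [h1]
  rcases i with i | i <;> rcases j with j | j <;>
    simp [Matrix.fromBlocks] <;> first | exact zero_mem _ | exact hX i j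

theorem lowerUnit_sub_one_mem {J : Ideal R} {Y : Matrix (Fin n₂) (Fin n₁) R}
    (hY : ∀ i j, Y i j ∈ J) :
    ∀ i j, (((lowerUnit Y : Matrix (Fin n₁ ⊕ Fin n₂) (Fin n₁ ⊕ Fin n₂) R)) - 1) i j ∈ J := by
  intro i j
  have h1 : ((lowerUnit Y : Matrix (Fin n₁ ⊕ Fin n₂) (Fin n₁ ⊕ Fin n₂) R)) - 1 =
      Matrix.fromBlocks 0 0 Y 0 := by
    show Matrix.fromBlocks 1 0 Y 1 - 1 = Matrix.fromBlocks 0 0 Y 0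
    rw [← Matrix.fromBlocks_one (l := Fin n₁) (m := Fin n₂) (α := R)]
    rw [sub_eq_add_neg, Matrix.fromBlocks_neg, Matrix.fromBlocks_add]
    simp
  rw [h1]
  rcases i with i | i <;> rcases j with j | j <;>
    simp [Matrix.fromBlocks] <;> first | exact zero_mem _ | exact hY i j

theorem step
    (hadic : IsAdic (maximalIdeal R))
    (hπsurj : Function.Surjective π) (hπker : RingHom.ker π = maximalIdeal R)
    (hσb₁ : Continuous fun g => (σb₁ g : Matrix (Fin n₁) (Fin n₁) k))
    (hσb₂ : Continuous fun g => (σb₂ g : Matrix (Fin n₂) (Fin n₂) k))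
    (hH1a : ∀ c : G → Matrix (Fin n₂) (Fin n₁) k, Continuous c →
      (∀ g h, c (g * h) = c g + (σb₂ g : Matrix (Fin n₂) (Fin n₂) k) * c h *
        (((σb₁ g)⁻¹ : Matrix.GeneralLinearGroup (Fin n₁) k) : Matrix (Fin n₁) (Fin n₁) k)) →
      ∃ M : Matrix (Fin n₂) (Fin n₁) k, ∀ g,
        c g = (σb₂ g : Matrix (Fin n₂) (Fin n₂) k) * M *
          (((σb₁ g)⁻¹ : Matrix.GeneralLinearGroup (Fin n₁) k) :
            Matrix (Fin n₁) (Fin n₁) k) - M)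
    (hH1b : ∀ c : G → Matrix (Fin n₁) (Fin n₂) k, Continuous c →
      (∀ g h, c (g * h) = c g + (σb₁ g : Matrix (Fin n₁) (Fin n₁) k) * c h *
        (((σb₂ g)⁻¹ : Matrix.GeneralLinearGroup (Fin n₂) k) : Matrix (Fin n₂) (Fin n₂) k)) →
      ∃ M : Matrix (Fin n₁) (Fin n₂) k, ∀ g,
        c g = (σb₁ g : Matrix (Fin n₁) (Fin n₁) k) * M *
          (((σb₂ g)⁻¹ : Matrix.GeneralLinearGroup (Fin n₂) k) :
            Matrix (Fin n₂) (Fin n₂) k) - M)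
    (t : ℕ) (ht : 1 ≤ t)
    (τ : G →* Matrix.GeneralLinearGroup (Fin n₁ ⊕ Fin n₂) R)
    (hτcont : Continuous fun g => (τ g : Matrix (Fin n₁ ⊕ Fin n₂) (Fin n₁ ⊕ Fin n₂) R))
    (hτred : ∀ g, ((τ g : Matrix (Fin n₁ ⊕ Fin n₂) (Fin n₁ ⊕ Fin n₂) R)).map π =
      Matrix.fromBlocks (σb₁ g : Matrix (Fin n₁) (Fin n₁) k) 0 0
        (σb₂ g : Matrix (Fin n₂) (Fin n₂) k))
    (hB : ∀ g i j, ((τ g : Matrix (Fin n₁ ⊕ Fin n₂) (Fin n₁ ⊕ Fin n₂) R)).toBlocks₁₂ i j ∈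
      maximalIdeal R ^ t)
    (hC : ∀ g i j, ((τ g : Matrix (Fin n₁ ⊕ Fin n₂) (Fin n₁ ⊕ Fin n₂) R)).toBlocks₂₁ i j ∈
      maximalIdeal R ^ t) :
    ∃ U : Matrix.GeneralLinearGroup (Fin n₁ ⊕ Fin n₂) R,
      (∀ i j, (((U : Matrix (Fin n₁ ⊕ Fin n₂) (Fin n₁ ⊕ Fin n₂) R)) - 1) i j ∈
        maximalIdeal R ^ t) ∧
      (∀ g, (((U * τ g * U⁻¹ : Matrix.GeneralLinearGroup (Fin n₁ ⊕ Fin n₂) R) :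
        Matrix (Fin n₁ ⊕ Fin n₂) (Fin n₁ ⊕ Fin n₂) R)).map π =
        Matrix.fromBlocks (σb₁ g : Matrix (Fin n₁) (Fin n₁) k) 0 0
          (σb₂ g : Matrix (Fin n₂) (Fin n₂) k)) ∧
      (∀ g i j, (((U * τ g * U⁻¹ : Matrix.GeneralLinearGroup (Fin n₁ ⊕ Fin n₂) R) :
        Matrix (Fin n₁ ⊕ Fin n₂) (Fin n₁ ⊕ Fin n₂) R)).toBlocks₁₂ i j ∈
        maximalIdeal R ^ (t + 1)) ∧
      (∀ g i j, (((U * τ g * U⁻¹ : Matrix.GeneralLinearGroup (Fin n₁ ⊕ Fin n₂) R) :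
        Matrix (Fin n₁ ⊕ Fin n₂) (Fin n₁ ⊕ Fin n₂) R)).toBlocks₂₁ i j ∈
        maximalIdeal R ^ (t + 1)) := by
  classical
  have hmt : maximalIdeal R ^ t ≤ maximalIdeal R := Ideal.pow_le_self (by omega)
  -- Step 1: kill the upper-right block
  obtain ⟨X, hXmem, hXkill⟩ := substepB hadic hπsurj hπker hσb₂ hH1b t τ hτcont hτred hB
  set U₁ := upperUnit (R := R) (n₁ := n₁) (n₂ := n₂) X with hU₁
  set τ₁ : G →* Matrix.GeneralLinearGroup (Fin n₁ ⊕ Fin n₂) R :=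
    ((MulAut.conj U₁).toMonoidHom).comp τ with hτ₁
  have hτ₁val : ∀ g, ((τ₁ g : Matrix (Fin n₁ ⊕ Fin n₂) (Fin n₁ ⊕ Fin n₂) R)) =
      Matrix.fromBlocks 1 X 0 1 *
        ((τ g : Matrix (Fin n₁ ⊕ Fin n₂) (Fin n₁ ⊕ Fin n₂) R)) *
        Matrix.fromBlocks 1 (-X) 0 1 := fun g => rfl
  have hτ₁cont : Continuous fun g => ((τ₁ g : Matrix (Fin n₁ ⊕ Fin n₂) (Fin n₁ ⊕ Fin n₂) R)) := by
    simp only [hτ₁val]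
    exact (continuous_const.matrix_mul hτcont).matrix_mul continuous_const
  have hτ₁red : ∀ g, ((τ₁ g : Matrix (Fin n₁ ⊕ Fin n₂) (Fin n₁ ⊕ Fin n₂) R)).map π =
      Matrix.fromBlocks (σb₁ g : Matrix (Fin n₁) (Fin n₁) k) 0 0
        (σb₂ g : Matrix (Fin n₂) (Fin n₂) k) := by
    intro g
    rw [hτ₁val g, Matrix.map_mul, Matrix.map_mul]
    have h₁ : ((Matrix.fromBlocks 1 X 0 1 : Matrix (Fin n₁ ⊕ Fin n₂) (Fin n₁ ⊕ Fin n₂) R)).map π = 1 :=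
      upperUnit_map_one hπker fun i j => hmt (hXmem i j)
    have h₂ : ((Matrix.fromBlocks 1 (-X) 0 1 : Matrix (Fin n₁ ⊕ Fin n₂) (Fin n₁ ⊕ Fin n₂) R)).map π = 1 :=
      upperUnit_map_one hπker fun i j => hmt (neg_mem (hXmem i j))
    rw [h₁, h₂, Matrix.one_mul, Matrix.mul_one, hτred g]
  have hτ₁blocks : ∀ g, ((τ₁ g : Matrix (Fin n₁ ⊕ Fin n₂) (Fin n₁ ⊕ Fin n₂) R)) =
      Matrix.fromBlocks
        (((τ g : Matrix (Fin n₁ ⊕ Fin n₂) (Fin n₁ ⊕ Fin n₂) R)).toBlocks₁₁ + X * ((τ g : Matrix (Fin n₁ ⊕ Fin n₂) (Fin n₁ ⊕ Fin n₂) R)).toBlocks₂₁)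
        (((τ g : Matrix (Fin n₁ ⊕ Fin n₂) (Fin n₁ ⊕ Fin n₂) R)).toBlocks₁₂ + X * ((τ g : Matrix (Fin n₁ ⊕ Fin n₂) (Fin n₁ ⊕ Fin n₂) R)).toBlocks₂₂ -
          (((τ g : Matrix (Fin n₁ ⊕ Fin n₂) (Fin n₁ ⊕ Fin n₂) R)).toBlocks₁₁ + X * ((τ g : Matrix (Fin n₁ ⊕ Fin n₂) (Fin n₁ ⊕ Fin n₂) R)).toBlocks₂₁) * X)
        (((τ g : Matrix (Fin n₁ ⊕ Fin n₂) (Fin n₁ ⊕ Fin n₂) R)).toBlocks₂₁)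
        (((τ g : Matrix (Fin n₁ ⊕ Fin n₂) (Fin n₁ ⊕ Fin n₂) R)).toBlocks₂₂ - ((τ g : Matrix (Fin n₁ ⊕ Fin n₂) (Fin n₁ ⊕ Fin n₂) R)).toBlocks₂₁ * X) := by
    intro g
    rw [hτ₁val g, conj_upper_blocks]
  have hτ₁B : ∀ g i j, ((τ₁ g : Matrix (Fin n₁ ⊕ Fin n₂) (Fin n₁ ⊕ Fin n₂) R)).toBlocks₁₂ i j ∈
      maximalIdeal R ^ (t + 1) := by
    intro g i j
    rw [hτ₁blocks g, Matrix.toBlocks_fromBlocks₁₂]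
    have hXCX : ∀ i j, ((X * ((τ g : Matrix (Fin n₁ ⊕ Fin n₂) (Fin n₁ ⊕ Fin n₂) R)).toBlocks₂₁) * X) i j ∈
        maximalIdeal R ^ (t + 1) := by
      have h1 : ∀ i j, (X * ((τ g : Matrix (Fin n₁ ⊕ Fin n₂) (Fin n₁ ⊕ Fin n₂) R)).toBlocks₂₁) i j ∈
          maximalIdeal R ^ t * maximalIdeal R ^ t := matmul_mem_mul hXmem (hC g)
      have h2 : ∀ i j, (X * ((τ g : Matrix (Fin n₁ ⊕ Fin n₂) (Fin n₁ ⊕ Fin n₂) R)).toBlocks₂₁) i j ∈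
          maximalIdeal R ^ (t + 1) := by
        intro i j
        have h3 : maximalIdeal R ^ t * maximalIdeal R ^ t ≤ maximalIdeal R ^ (t + 1) := by
          rw [← pow_add]
          exact Ideal.pow_le_pow_right (by omega)
        exact h3 (h1 i j)
      exact matmul_mem_right X h2
    have hsplit : ((τ g : Matrix (Fin n₁ ⊕ Fin n₂) (Fin n₁ ⊕ Fin n₂) R)).toBlocks₁₂ + X * ((τ g : Matrix (Fin n₁ ⊕ Fin n₂) (Fin n₁ ⊕ Fin n₂) R)).toBlocks₂₂ -
        (((τ g : Matrix (Fin n₁ ⊕ Fin n₂) (Fin n₁ ⊕ Fin n₂) R)).toBlocks₁₁ + X * ((τ g : Matrix (Fin n₁ ⊕ Fin n₂) (Fin n₁ ⊕ Fin n₂) R)).toBlocks₂₁) * X =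
        (((τ g : Matrix (Fin n₁ ⊕ Fin n₂) (Fin n₁ ⊕ Fin n₂) R)).toBlocks₁₂ + X * ((τ g : Matrix (Fin n₁ ⊕ Fin n₂) (Fin n₁ ⊕ Fin n₂) R)).toBlocks₂₂ -
          ((τ g : Matrix (Fin n₁ ⊕ Fin n₂) (Fin n₁ ⊕ Fin n₂) R)).toBlocks₁₁ * X) +
        (-((X * ((τ g : Matrix (Fin n₁ ⊕ Fin n₂) (Fin n₁ ⊕ Fin n₂) R)).toBlocks₂₁) * X)) := by
      rw [Matrix.add_mul]
      abel
    rw [hsplit, Matrix.add_apply]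
    exact add_mem (hXkill g i j) (by rw [Matrix.neg_apply]; exact neg_mem (hXCX i j))
  have hτ₁C : ∀ g i j, ((τ₁ g : Matrix (Fin n₁ ⊕ Fin n₂) (Fin n₁ ⊕ Fin n₂) R)).toBlocks₂₁ i j ∈
      maximalIdeal R ^ t := by
    intro g i j
    rw [hτ₁blocks g, Matrix.toBlocks_fromBlocks₂₁]
    exact hC g i j
  -- Step 2: kill the lower-left block
  obtain ⟨Y, hYmem, hYkill⟩ := substepC hadic hπsurj hπker hσb₁ hH1a t τ₁ hτ₁cont hτ₁red hτ₁C
  set U₂ := lowerUnit (R := R) (n₁ := n₁) (n₂ := n₂) Y with hU₂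
  set τ₂ : G →* Matrix.GeneralLinearGroup (Fin n₁ ⊕ Fin n₂) R :=
    ((MulAut.conj U₂).toMonoidHom).comp τ₁ with hτ₂
  have hτ₂val : ∀ g, ((τ₂ g : Matrix (Fin n₁ ⊕ Fin n₂) (Fin n₁ ⊕ Fin n₂) R)) =
      Matrix.fromBlocks 1 0 Y 1 *
        ((τ₁ g : Matrix (Fin n₁ ⊕ Fin n₂) (Fin n₁ ⊕ Fin n₂) R)) *
        Matrix.fromBlocks 1 0 (-Y) 1 := fun g => rfl
  have hτ₂red : ∀ g, ((τ₂ g : Matrix (Fin n₁ ⊕ Fin n₂) (Fin n₁ ⊕ Fin n₂) R)).map π =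
      Matrix.fromBlocks (σb₁ g : Matrix (Fin n₁) (Fin n₁) k) 0 0
        (σb₂ g : Matrix (Fin n₂) (Fin n₂) k) := by
    intro g
    rw [hτ₂val g, Matrix.map_mul, Matrix.map_mul]
    have h₁ : ((Matrix.fromBlocks 1 0 Y 1 : Matrix (Fin n₁ ⊕ Fin n₂) (Fin n₁ ⊕ Fin n₂) R)).map π = 1 :=
      lowerUnit_map_one hπker fun i j => hmt (hYmem i j)
    have h₂ : ((Matrix.fromBlocks 1 0 (-Y) 1 : Matrix (Fin n₁ ⊕ Fin n₂) (Fin n₁ ⊕ Fin n₂) R)).map π = 1 :=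
      lowerUnit_map_one hπker fun i j => hmt (neg_mem (hYmem i j))
    rw [h₁, h₂, Matrix.one_mul, Matrix.mul_one, hτ₁red g]
  have hτ₂blocks : ∀ g, ((τ₂ g : Matrix (Fin n₁ ⊕ Fin n₂) (Fin n₁ ⊕ Fin n₂) R)) =
      Matrix.fromBlocks
        (((τ₁ g : Matrix (Fin n₁ ⊕ Fin n₂) (Fin n₁ ⊕ Fin n₂) R)).toBlocks₁₁ - ((τ₁ g : Matrix (Fin n₁ ⊕ Fin n₂) (Fin n₁ ⊕ Fin n₂) R)).toBlocks₁₂ * Y)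
        (((τ₁ g : Matrix (Fin n₁ ⊕ Fin n₂) (Fin n₁ ⊕ Fin n₂) R)).toBlocks₁₂)
        (((τ₁ g : Matrix (Fin n₁ ⊕ Fin n₂) (Fin n₁ ⊕ Fin n₂) R)).toBlocks₂₁ + Y * ((τ₁ g : Matrix (Fin n₁ ⊕ Fin n₂) (Fin n₁ ⊕ Fin n₂) R)).toBlocks₁₁ -
          (Y * ((τ₁ g : Matrix (Fin n₁ ⊕ Fin n₂) (Fin n₁ ⊕ Fin n₂) R)).toBlocks₁₂ + ((τ₁ g : Matrix (Fin n₁ ⊕ Fin n₂) (Fin n₁ ⊕ Fin n₂) R)).toBlocks₂₂) * Y)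
        (((τ₁ g : Matrix (Fin n₁ ⊕ Fin n₂) (Fin n₁ ⊕ Fin n₂) R)).toBlocks₂₂ + Y * ((τ₁ g : Matrix (Fin n₁ ⊕ Fin n₂) (Fin n₁ ⊕ Fin n₂) R)).toBlocks₁₂) := by
    intro g
    rw [hτ₂val g, conj_lower_blocks]
  have hτ₂B : ∀ g i j, ((τ₂ g : Matrix (Fin n₁ ⊕ Fin n₂) (Fin n₁ ⊕ Fin n₂) R)).toBlocks₁₂ i j ∈
      maximalIdeal R ^ (t + 1) := by
    intro g i j
    rw [hτ₂blocks g, Matrix.toBlocks_fromBlocks₁₂]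
    exact hτ₁B g i j
  have hτ₂C : ∀ g i j, ((τ₂ g : Matrix (Fin n₁ ⊕ Fin n₂) (Fin n₁ ⊕ Fin n₂) R)).toBlocks₂₁ i j ∈
      maximalIdeal R ^ (t + 1) := by
    intro g i j
    rw [hτ₂blocks g, Matrix.toBlocks_fromBlocks₂₁]
    have hYBY : ∀ i j, ((Y * ((τ₁ g : Matrix (Fin n₁ ⊕ Fin n₂) (Fin n₁ ⊕ Fin n₂) R)).toBlocks₁₂) * Y) i j ∈
        maximalIdeal R ^ (t + 1) := by
      have h1 : ∀ i j, (Y * ((τ₁ g : Matrix (Fin n₁ ⊕ Fin n₂) (Fin n₁ ⊕ Fin n₂) R)).toBlocks₁₂) i j ∈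
          maximalIdeal R ^ (t + 1) := matmul_mem_left Y (hτ₁B g)
      exact matmul_mem_right Y h1
    have hsplit : ((τ₁ g : Matrix (Fin n₁ ⊕ Fin n₂) (Fin n₁ ⊕ Fin n₂) R)).toBlocks₂₁ + Y * ((τ₁ g : Matrix (Fin n₁ ⊕ Fin n₂) (Fin n₁ ⊕ Fin n₂) R)).toBlocks₁₁ -
        (Y * ((τ₁ g : Matrix (Fin n₁ ⊕ Fin n₂) (Fin n₁ ⊕ Fin n₂) R)).toBlocks₁₂ + ((τ₁ g : Matrix (Fin n₁ ⊕ Fin n₂) (Fin n₁ ⊕ Fin n₂) R)).toBlocks₂₂) * Y =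
        (((τ₁ g : Matrix (Fin n₁ ⊕ Fin n₂) (Fin n₁ ⊕ Fin n₂) R)).toBlocks₂₁ + Y * ((τ₁ g : Matrix (Fin n₁ ⊕ Fin n₂) (Fin n₁ ⊕ Fin n₂) R)).toBlocks₁₁ -
          ((τ₁ g : Matrix (Fin n₁ ⊕ Fin n₂) (Fin n₁ ⊕ Fin n₂) R)).toBlocks₂₂ * Y) +
        (-((Y * ((τ₁ g : Matrix (Fin n₁ ⊕ Fin n₂) (Fin n₁ ⊕ Fin n₂) R)).toBlocks₁₂) * Y)) := by
      rw [Matrix.add_mul]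
      abel
    rw [hsplit, Matrix.add_apply]
    exact add_mem (hYkill g i j) (by rw [Matrix.neg_apply]; exact neg_mem (hYBY i j))
  -- Assemble
  refine ⟨U₂ * U₁, ?_, ?_, ?_, ?_⟩
  · -- U₂ * U₁ - 1 entries in m^t
    intro i j
    have hQ : ∀ i j, (((U₂ : Matrix (Fin n₁ ⊕ Fin n₂) (Fin n₁ ⊕ Fin n₂) R)) - 1) i j ∈ maximalIdeal R ^ t :=
      lowerUnit_sub_one_mem hYmem
    have hP : ∀ i j, (((U₁ : Matrix (Fin n₁ ⊕ Fin n₂) (Fin n₁ ⊕ Fin n₂) R)) - 1) i j ∈ maximalIdeal R ^ t :=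
      upperUnit_sub_one_mem hXmem
    have hval : ((U₂ * U₁ : Matrix.GeneralLinearGroup (Fin n₁ ⊕ Fin n₂) R) :
        Matrix (Fin n₁ ⊕ Fin n₂) (Fin n₁ ⊕ Fin n₂) R) =
        ((U₂ : Matrix (Fin n₁ ⊕ Fin n₂) (Fin n₁ ⊕ Fin n₂) R)) * ((U₁ : Matrix (Fin n₁ ⊕ Fin n₂) (Fin n₁ ⊕ Fin n₂) R)) := rfl
    have hsplit : ((U₂ * U₁ : Matrix.GeneralLinearGroup (Fin n₁ ⊕ Fin n₂) R) :
        Matrix (Fin n₁ ⊕ Fin n₂) (Fin n₁ ⊕ Fin n₂) R) - 1 =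
        (((U₂ : Matrix (Fin n₁ ⊕ Fin n₂) (Fin n₁ ⊕ Fin n₂) R)) - 1) * ((U₁ : Matrix (Fin n₁ ⊕ Fin n₂) (Fin n₁ ⊕ Fin n₂) R)) +
        (((U₁ : Matrix (Fin n₁ ⊕ Fin n₂) (Fin n₁ ⊕ Fin n₂) R)) - 1) := by
      rw [hval, Matrix.sub_mul, Matrix.one_mul]
      abel
    rw [hsplit, Matrix.add_apply]
    exact add_mem (matmul_mem_right _ hQ i j) (hP i j)
  all_goals {
    have hconj : ∀ g, ((U₂ * U₁) * τ g * (U₂ * U₁)⁻¹ :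
        Matrix.GeneralLinearGroup (Fin n₁ ⊕ Fin n₂) R) = τ₂ g := by
      intro g
      show _ = (MulAut.conj U₂) ((MulAut.conj U₁) (τ g))
      rw [MulAut.conj_apply, MulAut.conj_apply]
      group
    first
    | exact fun g => by rw [hconj g]; exact hτ₂red g
    | exact fun g i j => by rw [hconj g]; exact hτ₂B g i j
    | exact fun g i j => by rw [hconj g]; exact hτ₂C g i j }

end StepSec

section LimitSec

variable {G : Type*} [Group G] [TopologicalSpace G] [IsTopologicalGroup G]
  {k : Type*} [Field k] [TopologicalSpace k] [DiscreteTopology k]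
  {R : Type*} [CommRing R] [IsLocalRing R] [IsNoetherianRing R]
  [TopologicalSpace R] [IsTopologicalRing R]
  {n₁ n₂ : ℕ}

theorem matrix_map_one_of_sub_mem {k : Type*} [Field k] {π : R →+* k}
    {t : ℕ} (hπker : RingHom.ker π = maximalIdeal R)
    (ht : 1 ≤ t) {a : Type*} [Fintype a] [DecidableEq a] {U : Matrix a a R}
    (h : ∀ i j, (U - 1) i j ∈ maximalIdeal R ^ t) : U.map π = 1 := by
  have h0 : (U - 1).map π = 0 := map_eq_zero_of_mem_pow hπker ht h
  ext i j
  have := congrFun (congrFun h0 i) j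
  rw [Matrix.map_apply, Matrix.sub_apply, map_sub, Matrix.zero_apply, sub_eq_zero] at this
  rw [Matrix.map_apply, this, Matrix.one_apply, Matrix.one_apply]
  by_cases hij : i = j <;> simp [hij]

variable {π : R →+* k}
  {σb₁ : G →* Matrix.GeneralLinearGroup (Fin n₁) k}
  {σb₂ : G →* Matrix.GeneralLinearGroup (Fin n₂) k}

/-- The invariant carried through the successive-approximation recursion. -/
abbrev DiagInv (π : R →+* k) (σb₁ : G →* Matrix.GeneralLinearGroup (Fin n₁) k)
    (σb₂ : G →* Matrix.GeneralLinearGroup (Fin n₂) k)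
    (ρ : G →* Matrix.GeneralLinearGroup (Fin n₁ ⊕ Fin n₂) R) (t : ℕ)
    (C : Matrix.GeneralLinearGroup (Fin n₁ ⊕ Fin n₂) R) : Prop :=
  ((C : Matrix (Fin n₁ ⊕ Fin n₂) (Fin n₁ ⊕ Fin n₂) R)).map π = 1 ∧
  (∀ g, (((C * ρ g * C⁻¹ : Matrix.GeneralLinearGroup (Fin n₁ ⊕ Fin n₂) R) :
    Matrix (Fin n₁ ⊕ Fin n₂) (Fin n₁ ⊕ Fin n₂) R)).map π =
    Matrix.fromBlocks (σb₁ g : Matrix (Fin n₁) (Fin n₁) k) 0 0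
      (σb₂ g : Matrix (Fin n₂) (Fin n₂) k)) ∧
  (∀ g i j, (((C * ρ g * C⁻¹ : Matrix.GeneralLinearGroup (Fin n₁ ⊕ Fin n₂) R) :
    Matrix (Fin n₁ ⊕ Fin n₂) (Fin n₁ ⊕ Fin n₂) R)).toBlocks₁₂ i j ∈
    maximalIdeal R ^ (t + 1)) ∧
  (∀ g i j, (((C * ρ g * C⁻¹ : Matrix.GeneralLinearGroup (Fin n₁ ⊕ Fin n₂) R) :
    Matrix (Fin n₁ ⊕ Fin n₂) (Fin n₁ ⊕ Fin n₂) R)).toBlocks₂₁ i j ∈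
    maximalIdeal R ^ (t + 1))

theorem exists_diag [IsAdicComplete (maximalIdeal R) R]
    (hadic : IsAdic (maximalIdeal R))
    (hπsurj : Function.Surjective π) (hπker : RingHom.ker π = maximalIdeal R)
    (hσb₁ : Continuous fun g => (σb₁ g : Matrix (Fin n₁) (Fin n₁) k))
    (hσb₂ : Continuous fun g => (σb₂ g : Matrix (Fin n₂) (Fin n₂) k))
    (hH1a : ∀ c : G → Matrix (Fin n₂) (Fin n₁) k, Continuous c →
      (∀ g h, c (g * h) = c g + (σb₂ g : Matrix (Fin n₂) (Fin n₂) k) * c h *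
        (((σb₁ g)⁻¹ : Matrix.GeneralLinearGroup (Fin n₁) k) : Matrix (Fin n₁) (Fin n₁) k)) →
      ∃ M : Matrix (Fin n₂) (Fin n₁) k, ∀ g,
        c g = (σb₂ g : Matrix (Fin n₂) (Fin n₂) k) * M *
          (((σb₁ g)⁻¹ : Matrix.GeneralLinearGroup (Fin n₁) k) :
            Matrix (Fin n₁) (Fin n₁) k) - M)
    (hH1b : ∀ c : G → Matrix (Fin n₁) (Fin n₂) k, Continuous c →
      (∀ g h, c (g * h) = c g + (σb₁ g : Matrix (Fin n₁) (Fin n₁) k) * c h *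
        (((σb₂ g)⁻¹ : Matrix.GeneralLinearGroup (Fin n₂) k) : Matrix (Fin n₂) (Fin n₂) k)) →
      ∃ M : Matrix (Fin n₁) (Fin n₂) k, ∀ g,
        c g = (σb₁ g : Matrix (Fin n₁) (Fin n₁) k) * M *
          (((σb₂ g)⁻¹ : Matrix.GeneralLinearGroup (Fin n₂) k) :
            Matrix (Fin n₂) (Fin n₂) k) - M)
    (ρ : G →* Matrix.GeneralLinearGroup (Fin n₁ ⊕ Fin n₂) R)
    (hρcont : Continuous (fun g => (ρ g : Matrix (Fin n₁ ⊕ Fin n₂) (Fin n₁ ⊕ Fin n₂) R)))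
    (hρred : ∀ g, ((ρ g : Matrix (Fin n₁ ⊕ Fin n₂) (Fin n₁ ⊕ Fin n₂) R)).map π =
      Matrix.fromBlocks (σb₁ g : Matrix (Fin n₁) (Fin n₁) k) 0 0
        (σb₂ g : Matrix (Fin n₂) (Fin n₂) k)) :
    ∃ Cu : Matrix.GeneralLinearGroup (Fin n₁ ⊕ Fin n₂) R,
      ((Cu : Matrix (Fin n₁ ⊕ Fin n₂) (Fin n₁ ⊕ Fin n₂) R)).map π = 1 ∧
      ((Cu⁻¹ : Matrix.GeneralLinearGroup (Fin n₁ ⊕ Fin n₂) R) :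
        Matrix (Fin n₁ ⊕ Fin n₂) (Fin n₁ ⊕ Fin n₂) R).map π = 1 ∧
      (∀ g, (((Cu * ρ g * Cu⁻¹ : Matrix.GeneralLinearGroup (Fin n₁ ⊕ Fin n₂) R) :
        Matrix (Fin n₁ ⊕ Fin n₂) (Fin n₁ ⊕ Fin n₂) R)).toBlocks₁₂ = 0) ∧
      (∀ g, (((Cu * ρ g * Cu⁻¹ : Matrix.GeneralLinearGroup (Fin n₁ ⊕ Fin n₂) R) :
        Matrix (Fin n₁ ⊕ Fin n₂) (Fin n₁ ⊕ Fin n₂) R)).toBlocks₂₁ = 0) := by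
  classical
  have hsmul_top : ∀ t : ℕ, ((maximalIdeal R) ^ t • ⊤ : Submodule R R) = maximalIdeal R ^ t := by
    intro t
    rw [Ideal.smul_eq_mul, Ideal.mul_top]
  have hzero : ∀ (x : R), (∀ t, x ∈ maximalIdeal R ^ t) → x = 0 := by
    intro x hx
    refine IsHausdorff.haus (IsAdicComplete.toIsHausdorff (I := maximalIdeal R) (M := R)) x ?_
    intro n
    rw [SModEq.sub_mem, sub_zero, hsmul_top]
    exact hx n
  have hbase : DiagInv π σb₁ σb₂ ρ 0 1 := by
    have hconj1 : ∀ g, (1 * ρ g * 1⁻¹ : Matrix.GeneralLinearGroup (Fin n₁ ⊕ Fin n₂) R) =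
        ρ g := by intro g; rw [one_mul, inv_one, mul_one]
    refine ⟨Matrix.map_one π (map_zero π) (map_one π), ?_, ?_, ?_⟩
    · intro g; rw [hconj1 g]; exact hρred g
    · intro g i j
      rw [hconj1 g, pow_one, ← hπker]
      have h0 : (((ρ g : Matrix (Fin n₁ ⊕ Fin n₂) (Fin n₁ ⊕ Fin n₂) R)).toBlocks₁₂).map π
          = 0 := by rw [← toBlocks₁₂_map, hρred g, Matrix.toBlocks_fromBlocks₁₂]
      have := congrFun (congrFun h0 i) j
      rwa [Matrix.map_apply, Matrix.zero_apply] at this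
    · intro g i j
      rw [hconj1 g, pow_one, ← hπker]
      have h0 : (((ρ g : Matrix (Fin n₁ ⊕ Fin n₂) (Fin n₁ ⊕ Fin n₂) R)).toBlocks₂₁).map π
          = 0 := by rw [← toBlocks₂₁_map, hρred g, Matrix.toBlocks_fromBlocks₂₁]
      have := congrFun (congrFun h0 i) j
      rwa [Matrix.map_apply, Matrix.zero_apply] at this
  have hstep : ∀ (t : ℕ) (C : Matrix.GeneralLinearGroup (Fin n₁ ⊕ Fin n₂) R),
      DiagInv π σb₁ σb₂ ρ t C →
      ∃ C' : Matrix.GeneralLinearGroup (Fin n₁ ⊕ Fin n₂) R, DiagInv π σb₁ σb₂ ρ (t + 1) C' ∧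
        ∀ i j, (((C' : Matrix (Fin n₁ ⊕ Fin n₂) (Fin n₁ ⊕ Fin n₂) R)) -
          ((C : Matrix (Fin n₁ ⊕ Fin n₂) (Fin n₁ ⊕ Fin n₂) R))) i j ∈
          maximalIdeal R ^ (t + 1) := by
    intro t C hC
    obtain ⟨hC1, hCred, hCB, hCC⟩ := hC
    set τ : G →* Matrix.GeneralLinearGroup (Fin n₁ ⊕ Fin n₂) R :=
      ((MulAut.conj C).toMonoidHom).comp ρ with hτ
    have hτval : ∀ g, τ g = C * ρ g * C⁻¹ := fun g => rfl
    have hτcont : Continuous fun g => (τ g : Matrix (Fin n₁ ⊕ Fin n₂) (Fin n₁ ⊕ Fin n₂) R) :=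
      (continuous_const.matrix_mul hρcont).matrix_mul continuous_const
    obtain ⟨U, hU1, hUred, hUB, hUC⟩ := step hadic hπsurj hπker hσb₁ hσb₂ hH1a hH1b
      (t + 1) (by omega) τ hτcont hCred hCB hCC
    have hconj : ∀ g, (U * C) * ρ g * (U * C)⁻¹ = U * τ g * U⁻¹ := by
      intro g
      rw [hτval g]
      group
    refine ⟨U * C, ⟨?_, ?_, ?_, ?_⟩, ?_⟩
    · rw [Units.val_mul, Matrix.map_mul,
        matrix_map_one_of_sub_mem hπker (by omega) hU1, hC1, Matrix.one_mul]
    · intro g; rw [hconj g]; exact hUred g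
    · intro g i j; rw [hconj g]; exact hUB g i j
    · intro g i j; rw [hconj g]; exact hUC g i j
    · intro i j
      have hsplit : ((U * C : Matrix.GeneralLinearGroup (Fin n₁ ⊕ Fin n₂) R) :
          Matrix (Fin n₁ ⊕ Fin n₂) (Fin n₁ ⊕ Fin n₂) R) -
          ((C : Matrix (Fin n₁ ⊕ Fin n₂) (Fin n₁ ⊕ Fin n₂) R)) =
          (((U : Matrix (Fin n₁ ⊕ Fin n₂) (Fin n₁ ⊕ Fin n₂) R)) - 1) *
          ((C : Matrix (Fin n₁ ⊕ Fin n₂) (Fin n₁ ⊕ Fin n₂) R)) := by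
        rw [Matrix.sub_mul, Matrix.one_mul]
        rfl
      rw [hsplit]
      exact matmul_mem_right _ hU1 i j
  -- build the sequence
  let seq : ∀ t : ℕ, {C : Matrix.GeneralLinearGroup (Fin n₁ ⊕ Fin n₂) R //
      DiagInv π σb₁ σb₂ ρ t C} :=
    fun t => Nat.rec ⟨1, hbase⟩
      (fun t p => ⟨Classical.choose (hstep t p.1 p.2),
        (Classical.choose_spec (hstep t p.1 p.2)).1⟩) t
  have hlink : ∀ t, ∀ i j, (((seq (t + 1)).1 : Matrix (Fin n₁ ⊕ Fin n₂) (Fin n₁ ⊕ Fin n₂) R) -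
      ((seq t).1 : Matrix (Fin n₁ ⊕ Fin n₂) (Fin n₁ ⊕ Fin n₂) R)) i j ∈
      maximalIdeal R ^ (t + 1) :=
    fun t => (Classical.choose_spec (hstep t (seq t).1 (seq t).2)).2
  have hdiff : ∀ a b, a ≤ b → ∀ i j,
      (((seq b).1 : Matrix (Fin n₁ ⊕ Fin n₂) (Fin n₁ ⊕ Fin n₂) R) -
       ((seq a).1 : Matrix (Fin n₁ ⊕ Fin n₂) (Fin n₁ ⊕ Fin n₂) R)) i j ∈
       maximalIdeal R ^ (a + 1) := by
    intro a b hab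
    induction b, hab using Nat.le_induction with
    | base => intro i j; simp
    | succ b hab ih =>
      intro i j
      have h1 := hlink b i j
      have h2 := ih i j
      have h3 : (((seq (b+1)).1 : Matrix (Fin n₁ ⊕ Fin n₂) (Fin n₁ ⊕ Fin n₂) R) -
          ((seq a).1 : Matrix (Fin n₁ ⊕ Fin n₂) (Fin n₁ ⊕ Fin n₂) R)) i j =
          (((seq (b+1)).1 : Matrix (Fin n₁ ⊕ Fin n₂) (Fin n₁ ⊕ Fin n₂) R) -
          ((seq b).1 : Matrix (Fin n₁ ⊕ Fin n₂) (Fin n₁ ⊕ Fin n₂) R)) i j +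
          (((seq b).1 : Matrix (Fin n₁ ⊕ Fin n₂) (Fin n₁ ⊕ Fin n₂) R) -
          ((seq a).1 : Matrix (Fin n₁ ⊕ Fin n₂) (Fin n₁ ⊕ Fin n₂) R)) i j := by
        simp [Matrix.sub_apply]
      rw [h3]
      exact add_mem (Ideal.pow_le_pow_right (by omega) h1) h2
  have hex : ∀ i j, ∃ L : R, ∀ t,
      ((seq t).1 : Matrix (Fin n₁ ⊕ Fin n₂) (Fin n₁ ⊕ Fin n₂) R) i j
      ≡ L [SMOD ((maximalIdeal R) ^ t • ⊤ : Submodule R R)] := by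
    intro i j
    refine IsPrecomplete.prec inferInstance ?_
    intro a b hab
    rw [SModEq.sub_mem, hsmul_top]
    have h5 := hdiff a b hab i j
    rw [Matrix.sub_apply] at h5
    have h4 : ((seq a).1 : Matrix (Fin n₁ ⊕ Fin n₂) (Fin n₁ ⊕ Fin n₂) R) i j -
        ((seq b).1 : Matrix (Fin n₁ ⊕ Fin n₂) (Fin n₁ ⊕ Fin n₂) R) i j =
        -(((seq b).1 : Matrix (Fin n₁ ⊕ Fin n₂) (Fin n₁ ⊕ Fin n₂) R) i j -
          ((seq a).1 : Matrix (Fin n₁ ⊕ Fin n₂) (Fin n₁ ⊕ Fin n₂) R) i j) := by ring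
    rw [h4]
    exact neg_mem (Ideal.pow_le_pow_right (by omega) h5)
  choose L hL using hex
  set Cl : Matrix (Fin n₁ ⊕ Fin n₂) (Fin n₁ ⊕ Fin n₂) R := fun i j => L i j with hCldef
  have hCt : ∀ t i j, (Cl - ((seq t).1 : Matrix (Fin n₁ ⊕ Fin n₂) (Fin n₁ ⊕ Fin n₂) R)) i j ∈
      maximalIdeal R ^ t := by
    intro t i j
    have h6 := hL i j t
    rw [SModEq.sub_mem, hsmul_top] at h6
    rw [Matrix.sub_apply]
    have h4 : Cl i j - ((seq t).1 : Matrix (Fin n₁ ⊕ Fin n₂) (Fin n₁ ⊕ Fin n₂) R) i j =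
        -((((seq t).1 : Matrix (Fin n₁ ⊕ Fin n₂) (Fin n₁ ⊕ Fin n₂) R)) i j - Cl i j) := by ring
    rw [h4]
    exact neg_mem h6
  have hCl1 : Cl.map π = 1 := by
    have h1 : (Cl - ((seq 1).1 : Matrix (Fin n₁ ⊕ Fin n₂) (Fin n₁ ⊕ Fin n₂) R)).map π = 0 := by
      refine map_eq_zero_of_mem_pow hπker le_rfl ?_
      intro i j
      exact hCt 1 i j
    have h2 : Cl.map π = (((seq 1).1 : Matrix (Fin n₁ ⊕ Fin n₂) (Fin n₁ ⊕ Fin n₂) R)).map π := by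
      ext i j
      have h8 := congrFun (congrFun h1 i) j
      rw [Matrix.map_apply, Matrix.sub_apply, map_sub, Matrix.zero_apply, sub_eq_zero] at h8
      exact h8
    rw [h2, (seq 1).2.1]
  have hdet : IsUnit Cl.det := by
    rw [← IsLocalRing.notMem_maximalIdeal, ← hπker]
    intro hmem
    have h9 : π Cl.det = 0 := hmem
    rw [RingHom.map_det, RingHom.mapMatrix_apply, hCl1, Matrix.det_one] at h9
    exact one_ne_zero h9
  set Cu : Matrix.GeneralLinearGroup (Fin n₁ ⊕ Fin n₂) R := Matrix.nonsingInvUnit Cl hdet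
    with hCudef
  have hCuval : ((Cu : Matrix (Fin n₁ ⊕ Fin n₂) (Fin n₁ ⊕ Fin n₂) R)) = Cl := rfl
  have hCuinv : ((Cu⁻¹ : Matrix.GeneralLinearGroup (Fin n₁ ⊕ Fin n₂) R) :
      Matrix (Fin n₁ ⊕ Fin n₂) (Fin n₁ ⊕ Fin n₂) R).map π = 1 := by
    have h1 : (((Cu⁻¹ : Matrix.GeneralLinearGroup (Fin n₁ ⊕ Fin n₂) R) :
        Matrix (Fin n₁ ⊕ Fin n₂) (Fin n₁ ⊕ Fin n₂) R) *
        ((Cu : Matrix (Fin n₁ ⊕ Fin n₂) (Fin n₁ ⊕ Fin n₂) R))).map π =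
        (1 : Matrix (Fin n₁ ⊕ Fin n₂) (Fin n₁ ⊕ Fin n₂) R).map π := by
      rw [Units.inv_mul]
    rw [Matrix.map_mul, hCuval, hCl1, Matrix.mul_one,
      Matrix.map_one π (map_zero π) (map_one π)] at h1
    exact h1
  -- difference between the limit conjugate and the stage-t conjugate
  have hEF : ∀ t g i j,
      ((((Cu * ρ g * Cu⁻¹ : Matrix.GeneralLinearGroup (Fin n₁ ⊕ Fin n₂) R) :
        Matrix (Fin n₁ ⊕ Fin n₂) (Fin n₁ ⊕ Fin n₂) R)) -
       ((((seq t).1 * ρ g * ((seq t).1)⁻¹ : Matrix.GeneralLinearGroup (Fin n₁ ⊕ Fin n₂) R) :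
        Matrix (Fin n₁ ⊕ Fin n₂) (Fin n₁ ⊕ Fin n₂) R))) i j ∈ maximalIdeal R ^ t := by
    intro t g i j
    set C := (seq t).1 with hCdef
    have hΔ : ∀ i j, ((Cl : Matrix (Fin n₁ ⊕ Fin n₂) (Fin n₁ ⊕ Fin n₂) R) -
        ((C : Matrix (Fin n₁ ⊕ Fin n₂) (Fin n₁ ⊕ Fin n₂) R))) i j ∈ maximalIdeal R ^ t :=
      hCt t
    have hinvdiff : ∀ i j, (((Cu⁻¹ : Matrix.GeneralLinearGroup (Fin n₁ ⊕ Fin n₂) R) :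
        Matrix (Fin n₁ ⊕ Fin n₂) (Fin n₁ ⊕ Fin n₂) R) -
        ((C⁻¹ : Matrix.GeneralLinearGroup (Fin n₁ ⊕ Fin n₂) R) :
        Matrix (Fin n₁ ⊕ Fin n₂) (Fin n₁ ⊕ Fin n₂) R)) i j ∈ maximalIdeal R ^ t := by
      have hiden : ((Cu⁻¹ : Matrix.GeneralLinearGroup (Fin n₁ ⊕ Fin n₂) R) :
          Matrix (Fin n₁ ⊕ Fin n₂) (Fin n₁ ⊕ Fin n₂) R) -
          ((C⁻¹ : Matrix.GeneralLinearGroup (Fin n₁ ⊕ Fin n₂) R) :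
          Matrix (Fin n₁ ⊕ Fin n₂) (Fin n₁ ⊕ Fin n₂) R) =
          ((Cu⁻¹ : Matrix.GeneralLinearGroup (Fin n₁ ⊕ Fin n₂) R) :
          Matrix (Fin n₁ ⊕ Fin n₂) (Fin n₁ ⊕ Fin n₂) R) *
          (((C : Matrix (Fin n₁ ⊕ Fin n₂) (Fin n₁ ⊕ Fin n₂) R)) -
           ((Cu : Matrix (Fin n₁ ⊕ Fin n₂) (Fin n₁ ⊕ Fin n₂) R))) *
          ((C⁻¹ : Matrix.GeneralLinearGroup (Fin n₁ ⊕ Fin n₂) R) :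
          Matrix (Fin n₁ ⊕ Fin n₂) (Fin n₁ ⊕ Fin n₂) R) := by
        rw [Matrix.mul_sub, Matrix.sub_mul, Matrix.mul_assoc, Units.mul_inv,
          Matrix.mul_one, Units.inv_mul, Matrix.one_mul]
      rw [hiden]
      intro i j
      refine matmul_mem_right _ ?_ i j
      refine matmul_mem_left _ ?_
      intro i j
      rw [Matrix.sub_apply]
      have h4 : ((C : Matrix (Fin n₁ ⊕ Fin n₂) (Fin n₁ ⊕ Fin n₂) R)) i j -
          ((Cu : Matrix (Fin n₁ ⊕ Fin n₂) (Fin n₁ ⊕ Fin n₂) R)) i j =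
          -((Cl - ((C : Matrix (Fin n₁ ⊕ Fin n₂) (Fin n₁ ⊕ Fin n₂) R))) i j) := by
        rw [hCuval, Matrix.sub_apply]
        ring
      rw [h4]
      exact neg_mem (hΔ i j)
    have hEFiden : (((Cu * ρ g * Cu⁻¹ : Matrix.GeneralLinearGroup (Fin n₁ ⊕ Fin n₂) R) :
        Matrix (Fin n₁ ⊕ Fin n₂) (Fin n₁ ⊕ Fin n₂) R)) -
        (((C * ρ g * C⁻¹ : Matrix.GeneralLinearGroup (Fin n₁ ⊕ Fin n₂) R) :
        Matrix (Fin n₁ ⊕ Fin n₂) (Fin n₁ ⊕ Fin n₂) R)) =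
        ((Cl - ((C : Matrix (Fin n₁ ⊕ Fin n₂) (Fin n₁ ⊕ Fin n₂) R))) *
          ((ρ g : Matrix (Fin n₁ ⊕ Fin n₂) (Fin n₁ ⊕ Fin n₂) R))) *
          ((Cu⁻¹ : Matrix.GeneralLinearGroup (Fin n₁ ⊕ Fin n₂) R) :
          Matrix (Fin n₁ ⊕ Fin n₂) (Fin n₁ ⊕ Fin n₂) R) +
        (((C : Matrix (Fin n₁ ⊕ Fin n₂) (Fin n₁ ⊕ Fin n₂) R)) *
          ((ρ g : Matrix (Fin n₁ ⊕ Fin n₂) (Fin n₁ ⊕ Fin n₂) R))) *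
          (((Cu⁻¹ : Matrix.GeneralLinearGroup (Fin n₁ ⊕ Fin n₂) R) :
          Matrix (Fin n₁ ⊕ Fin n₂) (Fin n₁ ⊕ Fin n₂) R) -
          ((C⁻¹ : Matrix.GeneralLinearGroup (Fin n₁ ⊕ Fin n₂) R) :
          Matrix (Fin n₁ ⊕ Fin n₂) (Fin n₁ ⊕ Fin n₂) R)) := by
      show ((Cu : Matrix (Fin n₁ ⊕ Fin n₂) (Fin n₁ ⊕ Fin n₂) R)) *
          ((ρ g : Matrix (Fin n₁ ⊕ Fin n₂) (Fin n₁ ⊕ Fin n₂) R)) *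
          ((Cu⁻¹ : Matrix.GeneralLinearGroup (Fin n₁ ⊕ Fin n₂) R) :
            Matrix (Fin n₁ ⊕ Fin n₂) (Fin n₁ ⊕ Fin n₂) R) -
          ((C : Matrix (Fin n₁ ⊕ Fin n₂) (Fin n₁ ⊕ Fin n₂) R)) *
          ((ρ g : Matrix (Fin n₁ ⊕ Fin n₂) (Fin n₁ ⊕ Fin n₂) R)) *
          ((C⁻¹ : Matrix.GeneralLinearGroup (Fin n₁ ⊕ Fin n₂) R) :
            Matrix (Fin n₁ ⊕ Fin n₂) (Fin n₁ ⊕ Fin n₂) R) = _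
      rw [hCuval]
      simp only [Matrix.sub_mul, Matrix.mul_sub]
      abel
    rw [hEFiden, Matrix.add_apply]
    refine add_mem (matmul_mem_right _ (matmul_mem_right _ hΔ) i j)
      (matmul_mem_left _ hinvdiff i j)
  refine ⟨Cu, hCl1, hCuinv, ?_, ?_⟩
  · intro g
    ext i j
    refine hzero _ ?_
    intro t
    have h1 := hEF t g (Sum.inl i) (Sum.inr j)
    have h2 := (seq t).2.2.2.1 g i j
    have h3 : (((Cu * ρ g * Cu⁻¹ : Matrix.GeneralLinearGroup (Fin n₁ ⊕ Fin n₂) R) :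
        Matrix (Fin n₁ ⊕ Fin n₂) (Fin n₁ ⊕ Fin n₂) R)).toBlocks₁₂ i j =
        ((((Cu * ρ g * Cu⁻¹ : Matrix.GeneralLinearGroup (Fin n₁ ⊕ Fin n₂) R) :
          Matrix (Fin n₁ ⊕ Fin n₂) (Fin n₁ ⊕ Fin n₂) R)) -
         ((((seq t).1 * ρ g * ((seq t).1)⁻¹ : Matrix.GeneralLinearGroup (Fin n₁ ⊕ Fin n₂) R) :
          Matrix (Fin n₁ ⊕ Fin n₂) (Fin n₁ ⊕ Fin n₂) R))) (Sum.inl i) (Sum.inr j) +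
        ((((seq t).1 * ρ g * ((seq t).1)⁻¹ : Matrix.GeneralLinearGroup (Fin n₁ ⊕ Fin n₂) R) :
          Matrix (Fin n₁ ⊕ Fin n₂) (Fin n₁ ⊕ Fin n₂) R)).toBlocks₁₂ i j := by
      rw [Matrix.sub_apply]
      show ((((Cu * ρ g * Cu⁻¹ : Matrix.GeneralLinearGroup (Fin n₁ ⊕ Fin n₂) R) :
          Matrix (Fin n₁ ⊕ Fin n₂) (Fin n₁ ⊕ Fin n₂) R)) (Sum.inl i) (Sum.inr j)) = _
      simp only [Matrix.toBlocks₁₂, Matrix.of_apply]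
      ring
    rw [h3]
    exact add_mem h1 (Ideal.pow_le_pow_right (by omega) h2)
  · intro g
    ext i j
    refine hzero _ ?_
    intro t
    have h1 := hEF t g (Sum.inr i) (Sum.inl j)
    have h2 := (seq t).2.2.2.2 g i j
    have h3 : (((Cu * ρ g * Cu⁻¹ : Matrix.GeneralLinearGroup (Fin n₁ ⊕ Fin n₂) R) :
        Matrix (Fin n₁ ⊕ Fin n₂) (Fin n₁ ⊕ Fin n₂) R)).toBlocks₂₁ i j =
        ((((Cu * ρ g * Cu⁻¹ : Matrix.GeneralLinearGroup (Fin n₁ ⊕ Fin n₂) R) :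
          Matrix (Fin n₁ ⊕ Fin n₂) (Fin n₁ ⊕ Fin n₂) R)) -
         ((((seq t).1 * ρ g * ((seq t).1)⁻¹ : Matrix.GeneralLinearGroup (Fin n₁ ⊕ Fin n₂) R) :
          Matrix (Fin n₁ ⊕ Fin n₂) (Fin n₁ ⊕ Fin n₂) R))) (Sum.inr i) (Sum.inl j) +
        ((((seq t).1 * ρ g * ((seq t).1)⁻¹ : Matrix.GeneralLinearGroup (Fin n₁ ⊕ Fin n₂) R) :
          Matrix (Fin n₁ ⊕ Fin n₂) (Fin n₁ ⊕ Fin n₂) R)).toBlocks₂₁ i j := by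
      rw [Matrix.sub_apply]
      show ((((Cu * ρ g * Cu⁻¹ : Matrix.GeneralLinearGroup (Fin n₁ ⊕ Fin n₂) R) :
          Matrix (Fin n₁ ⊕ Fin n₂) (Fin n₁ ⊕ Fin n₂) R)) (Sum.inr i) (Sum.inl j)) = _
      simp only [Matrix.toBlocks₂₁, Matrix.of_apply]
      ring
    rw [h3]
    exact add_mem h1 (Ideal.pow_le_pow_right (by omega) h2)

end LimitSec

section UniqSec

variable {G : Type*} [Group G]
  {k : Type*} [Field k]
  {R : Type*} [CommRing R] [IsLocalRing R] [IsNoetherianRing R]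

theorem mem_all_pow_eq_zero [IsAdicComplete (maximalIdeal R) R] (x : R)
    (hx : ∀ t, x ∈ maximalIdeal R ^ t) : x = 0 := by
  refine IsHausdorff.haus (IsAdicComplete.toIsHausdorff (I := maximalIdeal R) (M := R)) x ?_
  intro n
  rw [SModEq.sub_mem, sub_zero, Ideal.smul_eq_mul, Ideal.mul_top]
  exact hx n

theorem sub_one_mem_of_map_one {π : R →+* k} (hπker : RingHom.ker π = maximalIdeal R)
    {a : Type*} [Fintype a] [DecidableEq a] {U : Matrix a a R} (h : U.map π = 1) :
    ∀ i j, (U - 1) i j ∈ maximalIdeal R := by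
  intro i j
  rw [← hπker]
  show π ((U - 1) i j) = 0
  rw [Matrix.sub_apply, map_sub]
  have h1 : π (U i j) = (1 : Matrix a a k) i j := by
    rw [← h]; rfl
  rw [h1]
  have h2 : π ((1 : Matrix a a R) i j) = (1 : Matrix a a k) i j := by
    rw [Matrix.one_apply, Matrix.one_apply]
    by_cases hij : i = j <;> simp [hij]
  rw [h2, sub_self]

/-- Vanishing of equivariant homomorphisms lifts from the residue field:
if `H⁰` vanishes mod `m`, then any `Q` over `R` intertwining two lifts is zero. -/
theorem hom_zero [IsAdicComplete (maximalIdeal R) R] {a b : ℕ}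
    {π : R →+* k}
    (hπsurj : Function.Surjective π) (hπker : RingHom.ker π = maximalIdeal R)
    (σa : G →* Matrix.GeneralLinearGroup (Fin a) k)
    (σc : G →* Matrix.GeneralLinearGroup (Fin b) k)
    (hH0 : ∀ M : Matrix (Fin a) (Fin b) k,
      (∀ g, (σa g : Matrix (Fin a) (Fin a) k) * M = M * (σc g : Matrix (Fin b) (Fin b) k)) →
      M = 0)
    (s : G → Matrix (Fin a) (Fin a) R) (u : G → Matrix (Fin b) (Fin b) R)
    (hsred : ∀ g, (s g).map π = (σa g : Matrix (Fin a) (Fin a) k))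
    (hured : ∀ g, (u g).map π = (σc g : Matrix (Fin b) (Fin b) k))
    (Q : Matrix (Fin a) (Fin b) R)
    (hcomm : ∀ g, s g * Q = Q * u g) : Q = 0 := by
  classical
  have hind : ∀ t, ∀ i j, Q i j ∈ maximalIdeal R ^ t := by
    intro t
    induction t with
    | zero => intro i j; simp
    | succ t ih =>
      obtain ⟨d, φ, hsemi, hvanish, hsurjc⟩ := exists_coords π hπsurj hπker (maximalIdeal R ^ t)
      intro i j
      rw [pow_succ']
      refine (hvanish ⟨Q i j, ih i j⟩).mp ?_
      intro l
      have hPhiQ : PhiM (φ l) Q = 0 := by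
        refine hH0 _ ?_
        intro g
        have h1 : PhiM (φ l) (s g * Q) =
            (σa g : Matrix (Fin a) (Fin a) k) * PhiM (φ l) Q := by
          rw [PhiM_mul_left (φ l) (hsemi l) _ ih, hsred]
        have h2 : PhiM (φ l) (Q * u g) =
            PhiM (φ l) Q * (σc g : Matrix (Fin b) (Fin b) k) := by
          rw [PhiM_mul_right (φ l) (hsemi l) _ ih, hured]
        rw [← h1, ← h2, hcomm g]
      have h3 := congrFun (congrFun hPhiQ i) j
      rw [PhiM_apply_mem (φ l) (ih i j)] at h3
      exact h3
  ext i j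
  exact mem_all_pow_eq_zero _ (fun t => hind t i j)

end UniqSec

theorem stmt_7_proof
    (G : Type*) [Group G] [TopologicalSpace G] [IsTopologicalGroup G]
    [CompactSpace G] [TotallyDisconnectedSpace G] [T2Space G]
    (L : Subgroup G) (hLnormal : L.Normal) (hLclosed : IsClosed (L : Set G))
    (p : ℕ) (hp : p.Prime)
    (k : Type*) [Field k] [Fintype k] [TopologicalSpace k] [DiscreteTopology k]
    (hchar : CharP k p)
    (n₁ n₂ : ℕ)
    (σb₁ : G →* Matrix.GeneralLinearGroup (Fin n₁) k)
    (σb₂ : G →* Matrix.GeneralLinearGroup (Fin n₂) k)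
    (ρb : G →* Matrix.GeneralLinearGroup (Fin n₁ ⊕ Fin n₂) k)
    (hρb : ∀ g, (ρb g : Matrix (Fin n₁ ⊕ Fin n₂) (Fin n₁ ⊕ Fin n₂) k) =
      Matrix.fromBlocks ((σb₁ g : Matrix (Fin n₁) (Fin n₁) k)) 0 0
        ((σb₂ g : Matrix (Fin n₂) (Fin n₂) k)))
    (hρbcont : Continuous (fun g => (ρb g : Matrix (Fin n₁ ⊕ Fin n₂) (Fin n₁ ⊕ Fin n₂) k)))
    (hH0a : ∀ M : Matrix (Fin n₂) (Fin n₁) k,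
      (∀ g, (σb₂ g : Matrix (Fin n₂) (Fin n₂) k) * M =
        M * (σb₁ g : Matrix (Fin n₁) (Fin n₁) k)) → M = 0)
    (hH0b : ∀ M : Matrix (Fin n₁) (Fin n₂) k,
      (∀ g, (σb₁ g : Matrix (Fin n₁) (Fin n₁) k) * M =
        M * (σb₂ g : Matrix (Fin n₂) (Fin n₂) k)) → M = 0)
    (hH1a : ∀ c : G → Matrix (Fin n₂) (Fin n₁) k, Continuous c →
      (∀ g h, c (g * h) = c g + (σb₂ g : Matrix (Fin n₂) (Fin n₂) k) * c h *
        (((σb₁ g)⁻¹ : Matrix.GeneralLinearGroup (Fin n₁) k) : Matrix (Fin n₁) (Fin n₁) k)) →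
      ∃ M : Matrix (Fin n₂) (Fin n₁) k, ∀ g,
        c g = (σb₂ g : Matrix (Fin n₂) (Fin n₂) k) * M *
          (((σb₁ g)⁻¹ : Matrix.GeneralLinearGroup (Fin n₁) k) :
            Matrix (Fin n₁) (Fin n₁) k) - M)
    (hH1b : ∀ c : G → Matrix (Fin n₁) (Fin n₂) k, Continuous c →
      (∀ g h, c (g * h) = c g + (σb₁ g : Matrix (Fin n₁) (Fin n₁) k) * c h *
        (((σb₂ g)⁻¹ : Matrix.GeneralLinearGroup (Fin n₂) k) : Matrix (Fin n₂) (Fin n₂) k)) →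
      ∃ M : Matrix (Fin n₁) (Fin n₂) k, ∀ g,
        c g = (σb₁ g : Matrix (Fin n₁) (Fin n₁) k) * M *
          (((σb₂ g)⁻¹ : Matrix.GeneralLinearGroup (Fin n₂) k) :
            Matrix (Fin n₂) (Fin n₂) k) - M)
    (R : Type*) [CommRing R] [IsLocalRing R] [IsNoetherianRing R]
    [IsAdicComplete (IsLocalRing.maximalIdeal R) R]
    [TopologicalSpace R] [IsTopologicalRing R]
    (hadic : IsAdic (IsLocalRing.maximalIdeal R))
    (π : R →+* k) (hπsurj : Function.Surjective π)
    (hπker : RingHom.ker π = IsLocalRing.maximalIdeal R)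
    (ρ : G →* Matrix.GeneralLinearGroup (Fin n₁ ⊕ Fin n₂) R)
    (hρcont : Continuous (fun g => (ρ g : Matrix (Fin n₁ ⊕ Fin n₂) (Fin n₁ ⊕ Fin n₂) R)))
    (hρlift : ∀ g, ((ρ g : Matrix (Fin n₁ ⊕ Fin n₂) (Fin n₁ ⊕ Fin n₂) R)).map π =
      (ρb g : Matrix (Fin n₁ ⊕ Fin n₂) (Fin n₁ ⊕ Fin n₂) k)) :
    (∃ σ₁ σ₂, IsSplitLift π σb₁ σb₂ ρ σ₁ σ₂) ∧
    (∀ σ₁ σ₂ σ₁' σ₂', IsSplitLift π σb₁ σb₂ ρ σ₁ σ₂ → IsSplitLift π σb₁ σb₂ ρ σ₁' σ₂' →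
      (∃ C₁ : Matrix.GeneralLinearGroup (Fin n₁) R,
        (∀ i j, ((C₁ : Matrix (Fin n₁) (Fin n₁) R) - 1) i j ∈ IsLocalRing.maximalIdeal R) ∧
        ∀ g, C₁ * σ₁ g * C₁⁻¹ = σ₁' g) ∧
      (∃ C₂ : Matrix.GeneralLinearGroup (Fin n₂) R,
        (∀ i j, ((C₂ : Matrix (Fin n₂) (Fin n₂) R) - 1) i j ∈ IsLocalRing.maximalIdeal R) ∧
        ∀ g, C₂ * σ₂ g * C₂⁻¹ = σ₂' g)) := by
  classical
  have hσb₁cont : Continuous fun g => (σb₁ g : Matrix (Fin n₁) (Fin n₁) k) := by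
    have he : (fun g => (σb₁ g : Matrix (Fin n₁) (Fin n₁) k)) =
        fun g => ((ρb g : Matrix (Fin n₁ ⊕ Fin n₂) (Fin n₁ ⊕ Fin n₂) k)).toBlocks₁₁ := by
      funext g; rw [hρb g, Matrix.toBlocks_fromBlocks₁₁]
    rw [he]
    exact continuous_matrix fun i j => hρbcont.matrix_elem _ _
  have hσb₂cont : Continuous fun g => (σb₂ g : Matrix (Fin n₂) (Fin n₂) k) := by
    have he : (fun g => (σb₂ g : Matrix (Fin n₂) (Fin n₂) k)) =
        fun g => ((ρb g : Matrix (Fin n₁ ⊕ Fin n₂) (Fin n₁ ⊕ Fin n₂) k)).toBlocks₂₂ := by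
      funext g; rw [hρb g, Matrix.toBlocks_fromBlocks₂₂]
    rw [he]
    exact continuous_matrix fun i j => hρbcont.matrix_elem _ _
  have hρred : ∀ g, ((ρ g : Matrix (Fin n₁ ⊕ Fin n₂) (Fin n₁ ⊕ Fin n₂) R)).map π =
      Matrix.fromBlocks (σb₁ g : Matrix (Fin n₁) (Fin n₁) k) 0 0
        (σb₂ g : Matrix (Fin n₂) (Fin n₂) k) := by
    intro g; rw [hρlift g, hρb g]
  constructor
  · -- EXISTENCE
    obtain ⟨Cu, hCu1, hCuinv1, hB0, hC0⟩ :=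
      exists_diag hadic hπsurj hπker hσb₁cont hσb₂cont hH1a hH1b ρ hρcont hρred
    set E : G → Matrix (Fin n₁ ⊕ Fin n₂) (Fin n₁ ⊕ Fin n₂) R :=
      fun g => ((Cu * ρ g * Cu⁻¹ : Matrix.GeneralLinearGroup (Fin n₁ ⊕ Fin n₂) R) :
        Matrix (Fin n₁ ⊕ Fin n₂) (Fin n₁ ⊕ Fin n₂) R) with hEdef
    have hEval : ∀ g, E g = ((Cu : Matrix (Fin n₁ ⊕ Fin n₂) (Fin n₁ ⊕ Fin n₂) R)) *
        ((ρ g : Matrix (Fin n₁ ⊕ Fin n₂) (Fin n₁ ⊕ Fin n₂) R)) *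
        ((Cu⁻¹ : Matrix.GeneralLinearGroup (Fin n₁ ⊕ Fin n₂) R) :
          Matrix (Fin n₁ ⊕ Fin n₂) (Fin n₁ ⊕ Fin n₂) R) := fun g => rfl
    have hEcont : Continuous E := by
      rw [hEdef]
      exact (continuous_const.matrix_mul hρcont).matrix_mul continuous_const
    have hEmul : ∀ g h, E (g * h) = E g * E h := by
      intro g h
      have hu : (Cu * ρ (g * h) * Cu⁻¹ : Matrix.GeneralLinearGroup (Fin n₁ ⊕ Fin n₂) R) =
          (Cu * ρ g * Cu⁻¹) * (Cu * ρ h * Cu⁻¹) := by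
        rw [_root_.map_mul]
        group
      have := congrArg Units.val hu
      rw [Units.val_mul] at this
      exact this
    have hEone : E 1 = 1 := by
      have hu : (Cu * ρ 1 * Cu⁻¹ : Matrix.GeneralLinearGroup (Fin n₁ ⊕ Fin n₂) R) = 1 := by
        rw [_root_.map_one]
        group
      exact congrArg Units.val hu
    have hEred : ∀ g, (E g).map π =
        Matrix.fromBlocks (σb₁ g : Matrix (Fin n₁) (Fin n₁) k) 0 0
          (σb₂ g : Matrix (Fin n₂) (Fin n₂) k) := by
      intro g
      rw [hEval g, Matrix.map_mul, Matrix.map_mul, hCu1, hCuinv1, Matrix.one_mul,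
        Matrix.mul_one, hρred g]
    have hEb : ∀ g, (E g).toBlocks₁₂ = 0 := fun g => hB0 g
    have hEc : ∀ g, (E g).toBlocks₂₁ = 0 := fun g => hC0 g
    set S₁ : G → Matrix (Fin n₁) (Fin n₁) R := fun g => (E g).toBlocks₁₁ with hS₁def
    set S₂ : G → Matrix (Fin n₂) (Fin n₂) R := fun g => (E g).toBlocks₂₂ with hS₂def
    have hEblocks : ∀ g, E g = Matrix.fromBlocks (S₁ g) 0 0 (S₂ g) := by
      intro g
      conv_lhs => rw [← Matrix.fromBlocks_toBlocks (E g)]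
      rw [hEb g, hEc g]
    have hS₁mul : ∀ g h, S₁ (g * h) = S₁ g * S₁ h := by
      intro g h
      rw [hS₁def]
      show (E (g * h)).toBlocks₁₁ = _
      rw [hEmul g h, toBlocks₁₁_mul, hEb g, Matrix.zero_mul, add_zero]
    have hS₂mul : ∀ g h, S₂ (g * h) = S₂ g * S₂ h := by
      intro g h
      rw [hS₂def]
      show (E (g * h)).toBlocks₂₂ = _
      rw [hEmul g h, toBlocks₂₂_mul, hEc g, Matrix.zero_mul, zero_add]
    have hS₁one : S₁ 1 = 1 := by
      show (E 1).toBlocks₁₁ = 1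
      rw [hEone, toBlocks₁₁_one]
    have hS₂one : S₂ 1 = 1 := by
      show (E 1).toBlocks₂₂ = 1
      rw [hEone, toBlocks₂₂_one]
    have hS₁red : ∀ g, (S₁ g).map π = (σb₁ g : Matrix (Fin n₁) (Fin n₁) k) := by
      intro g
      have h1 := congrArg Matrix.toBlocks₁₁ (hEred g)
      rw [toBlocks₁₁_map, Matrix.toBlocks_fromBlocks₁₁] at h1
      exact h1
    have hS₂red : ∀ g, (S₂ g).map π = (σb₂ g : Matrix (Fin n₂) (Fin n₂) k) := by
      intro g
      have h1 := congrArg Matrix.toBlocks₂₂ (hEred g)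
      rw [toBlocks₂₂_map, Matrix.toBlocks_fromBlocks₂₂] at h1
      exact h1
    have hdet : ∀ g, IsUnit (S₁ g).det ∧ IsUnit (S₂ g).det := by
      intro g
      have h1 : IsUnit (E g) := (Cu * ρ g * Cu⁻¹).isUnit
      have h2 := (Matrix.isUnit_iff_isUnit_det _).mp h1
      rw [hEblocks g, Matrix.det_fromBlocks_zero₂₁] at h2
      exact ⟨isUnit_of_mul_isUnit_left h2,
        isUnit_of_mul_isUnit_left (by rwa [mul_comm] at h2)⟩
    set σ1 : G →* Matrix.GeneralLinearGroup (Fin n₁) R :=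
      { toFun := fun g => Matrix.nonsingInvUnit (S₁ g) (hdet g).1
        map_one' := Units.ext (by show S₁ 1 = 1; exact hS₁one)
        map_mul' := fun g h => Units.ext (by show S₁ (g * h) = S₁ g * S₁ h
                                             exact hS₁mul g h) } with hσ1def
    set σ2 : G →* Matrix.GeneralLinearGroup (Fin n₂) R :=
      { toFun := fun g => Matrix.nonsingInvUnit (S₂ g) (hdet g).2
        map_one' := Units.ext (by show S₂ 1 = 1; exact hS₂one)
        map_mul' := fun g h => Units.ext (by show S₂ (g * h) = S₂ g * S₂ h
                                             exact hS₂mul g h) } with hσ2def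
    have hσ1val : ∀ g, (σ1 g : Matrix (Fin n₁) (Fin n₁) R) = S₁ g := fun g => rfl
    have hσ2val : ∀ g, (σ2 g : Matrix (Fin n₂) (Fin n₂) R) = S₂ g := fun g => rfl
    refine ⟨σ1, σ2, ?_, ?_, ?_, ?_, Cu⁻¹, ?_, ?_⟩
    · simp only [hσ1val, hS₁def]
      exact continuous_matrix fun i j => hEcont.matrix_elem _ _
    · simp only [hσ2val, hS₂def]
      exact continuous_matrix fun i j => hEcont.matrix_elem _ _
    · intro g; rw [hσ1val g]; exact hS₁red g
    · intro g; rw [hσ2val g]; exact hS₂red g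
    · exact sub_one_mem_of_map_one hπker hCuinv1
    · intro g
      rw [hσ1val g, hσ2val g, ← hEblocks g, inv_inv, hEval g]
      simp only [Matrix.mul_assoc]
      rw [Units.inv_mul, Matrix.mul_one, Units.inv_mul_cancel_left]
  · -- UNIQUENESS
    intro σ₁ σ₂ σ₁' σ₂' h h'
    obtain ⟨hc₁, hc₂, hr₁, hr₂, C, hCmem, hCconj⟩ := h
    obtain ⟨hc₁', hc₂', hr₁', hr₂', C', hCmem', hCconj'⟩ := h'
    set D : G → Matrix (Fin n₁ ⊕ Fin n₂) (Fin n₁ ⊕ Fin n₂) R := fun g =>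
      Matrix.fromBlocks ((σ₁ g : Matrix (Fin n₁) (Fin n₁) R)) 0 0
        ((σ₂ g : Matrix (Fin n₂) (Fin n₂) R)) with hDdef
    set D' : G → Matrix (Fin n₁ ⊕ Fin n₂) (Fin n₁ ⊕ Fin n₂) R := fun g =>
      Matrix.fromBlocks ((σ₁' g : Matrix (Fin n₁) (Fin n₁) R)) 0 0
        ((σ₂' g : Matrix (Fin n₂) (Fin n₂) R)) with hD'def
    set Eu : Matrix.GeneralLinearGroup (Fin n₁ ⊕ Fin n₂) R := C'⁻¹ * C with hEudef
    set E : Matrix (Fin n₁ ⊕ Fin n₂) (Fin n₁ ⊕ Fin n₂) R :=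
      ((Eu : Matrix (Fin n₁ ⊕ Fin n₂) (Fin n₁ ⊕ Fin n₂) R)) with hEdef
    have hEval : E = ((C'⁻¹ : Matrix.GeneralLinearGroup (Fin n₁ ⊕ Fin n₂) R) :
        Matrix (Fin n₁ ⊕ Fin n₂) (Fin n₁ ⊕ Fin n₂) R) *
        ((C : Matrix (Fin n₁ ⊕ Fin n₂) (Fin n₁ ⊕ Fin n₂) R)) := rfl
    have h1 : ∀ g, ((C : Matrix (Fin n₁ ⊕ Fin n₂) (Fin n₁ ⊕ Fin n₂) R)) * D g =
        ((ρ g : Matrix (Fin n₁ ⊕ Fin n₂) (Fin n₁ ⊕ Fin n₂) R)) *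
        ((C : Matrix (Fin n₁ ⊕ Fin n₂) (Fin n₁ ⊕ Fin n₂) R)) := by
      intro g
      have h2 := congrArg (fun M => M * ((C : Matrix (Fin n₁ ⊕ Fin n₂) (Fin n₁ ⊕ Fin n₂) R)))
        (hCconj g)
      rwa [Units.inv_mul_cancel_right] at h2
    have h2 : ∀ g, ((C'⁻¹ : Matrix.GeneralLinearGroup (Fin n₁ ⊕ Fin n₂) R) :
        Matrix (Fin n₁ ⊕ Fin n₂) (Fin n₁ ⊕ Fin n₂) R) *
        ((ρ g : Matrix (Fin n₁ ⊕ Fin n₂) (Fin n₁ ⊕ Fin n₂) R)) =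
        D' g * ((C'⁻¹ : Matrix.GeneralLinearGroup (Fin n₁ ⊕ Fin n₂) R) :
        Matrix (Fin n₁ ⊕ Fin n₂) (Fin n₁ ⊕ Fin n₂) R) := by
      intro g
      rw [← hCconj' g, ← Matrix.mul_assoc, Units.inv_mul_cancel_left]
    have hE : ∀ g, E * D g = D' g * E := by
      intro g
      rw [hEval, Matrix.mul_assoc, h1 g, ← Matrix.mul_assoc, h2 g, Matrix.mul_assoc]
    -- reduction of E
    have hCred : ((C : Matrix (Fin n₁ ⊕ Fin n₂) (Fin n₁ ⊕ Fin n₂) R)).map π = 1 :=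
      matrix_map_one_of_sub_mem hπker le_rfl (fun i j => by
        rw [pow_one]; exact hCmem i j)
    have hC'red : ((C' : Matrix (Fin n₁ ⊕ Fin n₂) (Fin n₁ ⊕ Fin n₂) R)).map π = 1 :=
      matrix_map_one_of_sub_mem hπker le_rfl (fun i j => by
        rw [pow_one]; exact hCmem' i j)
    have hC'invred : ((C'⁻¹ : Matrix.GeneralLinearGroup (Fin n₁ ⊕ Fin n₂) R) :
        Matrix (Fin n₁ ⊕ Fin n₂) (Fin n₁ ⊕ Fin n₂) R).map π = 1 := by
      have ha : (((C'⁻¹ : Matrix.GeneralLinearGroup (Fin n₁ ⊕ Fin n₂) R) :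
          Matrix (Fin n₁ ⊕ Fin n₂) (Fin n₁ ⊕ Fin n₂) R) *
          ((C' : Matrix (Fin n₁ ⊕ Fin n₂) (Fin n₁ ⊕ Fin n₂) R))).map π =
          (1 : Matrix (Fin n₁ ⊕ Fin n₂) (Fin n₁ ⊕ Fin n₂) R).map π := by
        rw [Units.inv_mul]
      rw [Matrix.map_mul, hC'red, Matrix.mul_one,
        Matrix.map_one π (map_zero π) (map_one π)] at ha
      exact ha
    have hEred : E.map π = 1 := by
      rw [hEval, Matrix.map_mul, hC'invred, hCred, Matrix.mul_one]
    -- the off-diagonal blocks of E vanish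
    have hDblocks : ∀ g, (D g).toBlocks₁₁ = (σ₁ g : Matrix (Fin n₁) (Fin n₁) R) ∧
        (D g).toBlocks₁₂ = 0 ∧ (D g).toBlocks₂₁ = 0 ∧
        (D g).toBlocks₂₂ = (σ₂ g : Matrix (Fin n₂) (Fin n₂) R) := by
      intro g
      exact ⟨Matrix.toBlocks_fromBlocks₁₁ _ _ _ _, Matrix.toBlocks_fromBlocks₁₂ _ _ _ _,
        Matrix.toBlocks_fromBlocks₂₁ _ _ _ _, Matrix.toBlocks_fromBlocks₂₂ _ _ _ _⟩
    have hD'blocks : ∀ g, (D' g).toBlocks₁₁ = (σ₁' g : Matrix (Fin n₁) (Fin n₁) R) ∧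
        (D' g).toBlocks₁₂ = 0 ∧ (D' g).toBlocks₂₁ = 0 ∧
        (D' g).toBlocks₂₂ = (σ₂' g : Matrix (Fin n₂) (Fin n₂) R) := by
      intro g
      exact ⟨Matrix.toBlocks_fromBlocks₁₁ _ _ _ _, Matrix.toBlocks_fromBlocks₁₂ _ _ _ _,
        Matrix.toBlocks_fromBlocks₂₁ _ _ _ _, Matrix.toBlocks_fromBlocks₂₂ _ _ _ _⟩
    have hQ : E.toBlocks₁₂ = 0 := by
      refine hom_zero hπsurj hπker σb₁ σb₂ hH0b
        (fun g => ((σ₁' g : Matrix (Fin n₁) (Fin n₁) R)))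
        (fun g => ((σ₂ g : Matrix (Fin n₂) (Fin n₂) R))) hr₁' hr₂ _ ?_
      intro g
      have ha := congrArg Matrix.toBlocks₁₂ (hE g)
      rw [toBlocks₁₂_mul, toBlocks₁₂_mul, (hDblocks g).2.1, (hDblocks g).2.2.2,
        (hD'blocks g).1, (hD'blocks g).2.1, Matrix.mul_zero, Matrix.zero_mul, zero_add,
        add_zero] at ha
      exact ha.symm
    have hS : E.toBlocks₂₁ = 0 := by
      refine hom_zero hπsurj hπker σb₂ σb₁ hH0a
        (fun g => ((σ₂' g : Matrix (Fin n₂) (Fin n₂) R)))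
        (fun g => ((σ₁ g : Matrix (Fin n₁) (Fin n₁) R))) hr₂' hr₁ _ ?_
      intro g
      have ha := congrArg Matrix.toBlocks₂₁ (hE g)
      rw [toBlocks₂₁_mul, toBlocks₂₁_mul, (hDblocks g).1, (hDblocks g).2.2.1,
        (hD'blocks g).2.2.1, (hD'blocks g).2.2.2, Matrix.mul_zero, Matrix.zero_mul, zero_add,
        add_zero] at ha
      exact ha.symm
    -- the diagonal blocks conjugate
    set P : Matrix (Fin n₁) (Fin n₁) R := E.toBlocks₁₁ with hPdef
    set T : Matrix (Fin n₂) (Fin n₂) R := E.toBlocks₂₂ with hTdef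
    have hEblocks : E = Matrix.fromBlocks P 0 0 T := by
      conv_lhs => rw [← Matrix.fromBlocks_toBlocks E]
      rw [hQ, hS]
    have hP : ∀ g, P * (σ₁ g : Matrix (Fin n₁) (Fin n₁) R) =
        (σ₁' g : Matrix (Fin n₁) (Fin n₁) R) * P := by
      intro g
      have ha := congrArg Matrix.toBlocks₁₁ (hE g)
      rw [toBlocks₁₁_mul, toBlocks₁₁_mul, (hDblocks g).1, (hDblocks g).2.2.1,
        (hD'blocks g).1, (hD'blocks g).2.1, Matrix.mul_zero, hS, Matrix.zero_mul, add_zero,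
        add_zero] at ha
      exact ha
    have hT : ∀ g, T * (σ₂ g : Matrix (Fin n₂) (Fin n₂) R) =
        (σ₂' g : Matrix (Fin n₂) (Fin n₂) R) * T := by
      intro g
      have ha := congrArg Matrix.toBlocks₂₂ (hE g)
      rw [toBlocks₂₂_mul, toBlocks₂₂_mul, (hDblocks g).2.1, (hDblocks g).2.2.2,
        (hD'blocks g).2.2.1, (hD'blocks g).2.2.2, Matrix.mul_zero, hQ, Matrix.zero_mul,
        zero_add, zero_add] at ha
      exact ha
    -- invertibility of the diagonal blocks
    have hdet : IsUnit P.det ∧ IsUnit T.det := by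
      have hu : IsUnit E := Eu.isUnit
      have h2 := (Matrix.isUnit_iff_isUnit_det _).mp hu
      rw [hEblocks, Matrix.det_fromBlocks_zero₂₁] at h2
      exact ⟨isUnit_of_mul_isUnit_left h2,
        isUnit_of_mul_isUnit_left (by rwa [mul_comm] at h2)⟩
    have hEsub : ∀ i j, (E - 1) i j ∈ IsLocalRing.maximalIdeal R :=
      sub_one_mem_of_map_one hπker hEred
    constructor
    · refine ⟨Matrix.nonsingInvUnit P hdet.1, ?_, ?_⟩
      · intro i j
        have ha := hEsub (Sum.inl i) (Sum.inl j)
        rw [Matrix.sub_apply] at ha ⊢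
        show P i j - (1 : Matrix (Fin n₁) (Fin n₁) R) i j ∈ _
        rw [← one_apply_inl_inl (β := Fin n₂) i j]
        exact ha
      · intro g
        refine Units.ext ?_
        show P * (σ₁ g : Matrix (Fin n₁) (Fin n₁) R) *
          (((Matrix.nonsingInvUnit P hdet.1)⁻¹ : Matrix.GeneralLinearGroup (Fin n₁) R) :
            Matrix (Fin n₁) (Fin n₁) R) = (σ₁' g : Matrix (Fin n₁) (Fin n₁) R)
        rw [hP g, Matrix.mul_assoc]
        have hone : P * (((Matrix.nonsingInvUnit P hdet.1)⁻¹ :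
            Matrix.GeneralLinearGroup (Fin n₁) R) : Matrix (Fin n₁) (Fin n₁) R) = 1 :=
          Units.mul_inv (Matrix.nonsingInvUnit P hdet.1)
        rw [hone, Matrix.mul_one]
    · refine ⟨Matrix.nonsingInvUnit T hdet.2, ?_, ?_⟩
      · intro i j
        have ha := hEsub (Sum.inr i) (Sum.inr j)
        rw [Matrix.sub_apply] at ha ⊢
        show T i j - (1 : Matrix (Fin n₂) (Fin n₂) R) i j ∈ _
        rw [← one_apply_inr_inr (α := Fin n₁) i j]
        exact ha
      · intro g
        refine Units.ext ?_
        show T * (σ₂ g : Matrix (Fin n₂) (Fin n₂) R) *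
          (((Matrix.nonsingInvUnit T hdet.2)⁻¹ : Matrix.GeneralLinearGroup (Fin n₂) R) :
            Matrix (Fin n₂) (Fin n₂) R) = (σ₂' g : Matrix (Fin n₂) (Fin n₂) R)
        rw [hT g, Matrix.mul_assoc]
        have hone : T * (((Matrix.nonsingInvUnit T hdet.2)⁻¹ :
            Matrix.GeneralLinearGroup (Fin n₂) R) : Matrix (Fin n₂) (Fin n₂) R) = 1 :=
          Units.mul_inv (Matrix.nonsingInvUnit T hdet.2)
        rw [hone, Matrix.mul_one]


/-- Let `G` be a profinite group, `L` a closed normal subgroup, and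
`ρ̄ : G → GLₙ(k)` a continuous representation over a finite field `k` of characteristic `p`,
decomposing as `ρ̄ = σ̄₁ ⊕ σ̄₂` of dimensions `n₁, n₂`.  Suppose `H⁰` and `H¹` of `G` with
coefficients in `Hom(σ̄₁, σ̄₂)` and in `Hom(σ̄₂, σ̄₁)` all vanish (expressed concretely by the
vanishing of invariants and the triviality of continuous cocycles below).  Then for any
complete Noetherian local ring `R` with residue field `k` (with its `m_R`-adic topology) and
any continuous lift `ρ : G → GLₙ(R)` of `ρ̄`, there exist continuous lifts
`σᵢ : G → GL_{nᵢ}(R)` of `σ̄ᵢ` such that `σ₁ ⊕ σ₂` is conjugate to `ρ` by an element of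
`1 + Mₙ(m_R)`, and each `σᵢ` is unique up to conjugation by `1 + M_{nᵢ}(m_R)`. -/
theorem stmt_7
    (G : Type*) [Group G] [TopologicalSpace G] [IsTopologicalGroup G]
    [CompactSpace G] [TotallyDisconnectedSpace G] [T2Space G]
    (L : Subgroup G) (hLnormal : L.Normal) (hLclosed : IsClosed (L : Set G))
    (p : ℕ) (hp : p.Prime)
    (k : Type*) [Field k] [Fintype k] [TopologicalSpace k] [DiscreteTopology k]
    (hchar : CharP k p)
    (n₁ n₂ : ℕ)
    (σb₁ : G →* Matrix.GeneralLinearGroup (Fin n₁) k)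
    (σb₂ : G →* Matrix.GeneralLinearGroup (Fin n₂) k)
    (ρb : G →* Matrix.GeneralLinearGroup (Fin n₁ ⊕ Fin n₂) k)
    (hρb : ∀ g, (ρb g : Matrix (Fin n₁ ⊕ Fin n₂) (Fin n₁ ⊕ Fin n₂) k) =
      Matrix.fromBlocks ((σb₁ g : Matrix (Fin n₁) (Fin n₁) k)) 0 0
        ((σb₂ g : Matrix (Fin n₂) (Fin n₂) k)))
    (hρbcont : Continuous (fun g => (ρb g : Matrix (Fin n₁ ⊕ Fin n₂) (Fin n₁ ⊕ Fin n₂) k)))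
    -- vanishing of H⁰(G, Hom(σ̄₁, σ̄₂)) and H⁰(G, Hom(σ̄₂, σ̄₁))
    (hH0a : ∀ M : Matrix (Fin n₂) (Fin n₁) k,
      (∀ g, (σb₂ g : Matrix (Fin n₂) (Fin n₂) k) * M =
        M * (σb₁ g : Matrix (Fin n₁) (Fin n₁) k)) → M = 0)
    (hH0b : ∀ M : Matrix (Fin n₁) (Fin n₂) k,
      (∀ g, (σb₁ g : Matrix (Fin n₁) (Fin n₁) k) * M =
        M * (σb₂ g : Matrix (Fin n₂) (Fin n₂) k)) → M = 0)
    -- vanishing of H¹(G, Hom(σ̄₁, σ̄₂)) and H¹(G, Hom(σ̄₂, σ̄₁)): every continuous cocycle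
    -- is a coboundary
    (hH1a : ∀ c : G → Matrix (Fin n₂) (Fin n₁) k, Continuous c →
      (∀ g h, c (g * h) = c g + (σb₂ g : Matrix (Fin n₂) (Fin n₂) k) * c h *
        (((σb₁ g)⁻¹ : Matrix.GeneralLinearGroup (Fin n₁) k) : Matrix (Fin n₁) (Fin n₁) k)) →
      ∃ M : Matrix (Fin n₂) (Fin n₁) k, ∀ g,
        c g = (σb₂ g : Matrix (Fin n₂) (Fin n₂) k) * M *
          (((σb₁ g)⁻¹ : Matrix.GeneralLinearGroup (Fin n₁) k) :
            Matrix (Fin n₁) (Fin n₁) k) - M)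
    (hH1b : ∀ c : G → Matrix (Fin n₁) (Fin n₂) k, Continuous c →
      (∀ g h, c (g * h) = c g + (σb₁ g : Matrix (Fin n₁) (Fin n₁) k) * c h *
        (((σb₂ g)⁻¹ : Matrix.GeneralLinearGroup (Fin n₂) k) : Matrix (Fin n₂) (Fin n₂) k)) →
      ∃ M : Matrix (Fin n₁) (Fin n₂) k, ∀ g,
        c g = (σb₁ g : Matrix (Fin n₁) (Fin n₁) k) * M *
          (((σb₂ g)⁻¹ : Matrix.GeneralLinearGroup (Fin n₂) k) :
            Matrix (Fin n₂) (Fin n₂) k) - M)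
    -- `R` a complete Noetherian local ring with residue field `k`, with the adic topology
    (R : Type*) [CommRing R] [IsLocalRing R] [IsNoetherianRing R]
    [IsAdicComplete (IsLocalRing.maximalIdeal R) R]
    [TopologicalSpace R] [IsTopologicalRing R]
    (hadic : IsAdic (IsLocalRing.maximalIdeal R))
    (π : R →+* k) (hπsurj : Function.Surjective π)
    (hπker : RingHom.ker π = IsLocalRing.maximalIdeal R)
    -- a continuous lift of `ρ̄`
    (ρ : G →* Matrix.GeneralLinearGroup (Fin n₁ ⊕ Fin n₂) R)
    (hρcont : Continuous (fun g => (ρ g : Matrix (Fin n₁ ⊕ Fin n₂) (Fin n₁ ⊕ Fin n₂) R)))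
    (hρlift : ∀ g, ((ρ g : Matrix (Fin n₁ ⊕ Fin n₂) (Fin n₁ ⊕ Fin n₂) R)).map π =
      (ρb g : Matrix (Fin n₁ ⊕ Fin n₂) (Fin n₁ ⊕ Fin n₂) k)) :
    (∃ σ₁ σ₂, IsSplitLift π σb₁ σb₂ ρ σ₁ σ₂) ∧
    (∀ σ₁ σ₂ σ₁' σ₂', IsSplitLift π σb₁ σb₂ ρ σ₁ σ₂ → IsSplitLift π σb₁ σb₂ ρ σ₁' σ₂' →
      (∃ C₁ : Matrix.GeneralLinearGroup (Fin n₁) R,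
        (∀ i j, ((C₁ : Matrix (Fin n₁) (Fin n₁) R) - 1) i j ∈ IsLocalRing.maximalIdeal R) ∧
        ∀ g, C₁ * σ₁ g * C₁⁻¹ = σ₁' g) ∧
      (∃ C₂ : Matrix.GeneralLinearGroup (Fin n₂) R,
        (∀ i j, ((C₂ : Matrix (Fin n₂) (Fin n₂) R) - 1) i j ∈ IsLocalRing.maximalIdeal R) ∧
        ∀ g, C₂ * σ₂ g * C₂⁻¹ = σ₂' g)) :=
  stmt_7_proof G L hLnormal hLclosed p hp k hchar n₁ n₂ σb₁ σb₂ ρb hρb hρbcont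
    hH0a hH0b hH1a hH1b R hadic π hπsurj hπker ρ hρcont hρlift
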